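/- arXiv:2304.11468 — 6 statements merged into one kernel-verified Lean document; each statement's English description precedes it below -/
import Mathlib

section
/- Let D, d, d_e be positive integers with d_e ≤ d ≤ D. Let β_s = ⌊D/d⌋ and β_l = ⌈D/d⌉. Partition D input dimensions into d bins, of which dβ_l − D bins have size β_s and D − dβ_s bins have size β_l. Then the probability that a uniformly random d_e-subset of the D dimensions hits each bin at most once equals (∑_{i=0}^{d_e} C(d(1+β_s)−D, i) · C(D−dβ_s, d_e−i) · β_s^i · β_l^{d_e−i}) / C(D, d_e). -/
open Finset Polynomial


lemma aux_coeff_pow (a n k : ℕ) :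
    (((C a * X + 1) : ℕ[X]) ^ n).coeff k = n.choose k * a ^ k := by
  rw [add_pow, finset_sum_coeff]
  have h : ∀ i ∈ Finset.range (n+1),
      ((C a * X) ^ i * 1 ^ (n - i) * (n.choose i : ℕ[X])).coeff k
        = if i = k then n.choose k * a ^ k else 0 := by
    intro i hi
    rw [one_pow, mul_one, mul_pow, ← C_pow, ← C_eq_natCast, mul_right_comm, ← C_mul,
      coeff_C_mul, coeff_X_pow]
    rcases eq_or_ne i k with rfl | hik
    · simp [mul_comm]
    · simp [hik, Ne.symm hik]
  rw [Finset.sum_congr rfl h, Finset.sum_ite_eq' (Finset.range (n+1)) k]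
  rcases le_or_gt k n with hk | hk
  · simp [Finset.mem_range, Nat.lt_succ_of_le hk]
  · simp [Finset.mem_range, Nat.choose_eq_zero_of_lt hk]

lemma aux_expand {ι : Type*} [DecidableEq ι] (s : Finset ι) (c : ι → ℕ) (k : ℕ) :
    ∑ T ∈ s.powersetCard k, ∏ j ∈ T, c j
      = (∏ j ∈ s, ((C (c j) * X + 1) : ℕ[X])).coeff k := by
  rw [Finset.prod_add, finset_sum_coeff]
  have h : ∀ t ∈ s.powerset,
      ((∏ j ∈ t, (C (c j) * X)) * ∏ _j ∈ s \ t, (1:ℕ[X])).coeff k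
        = if t.card = k then ∏ j ∈ t, c j else 0 := by
    intro t ht
    rw [Finset.prod_const_one, mul_one, Finset.prod_mul_distrib, Finset.prod_const,
      ← map_prod C c t, coeff_C_mul, coeff_X_pow]
    rcases eq_or_ne t.card k with h | h
    · simp [h]
    · simp [h, Ne.symm h]
  rw [Finset.sum_congr rfl h, Finset.sum_ite, Finset.sum_const_zero, add_zero,
    Finset.powersetCard_eq_filter]

lemma aux_fiber {α β : Type*} [Fintype α] [DecidableEq α] [DecidableEq β]
    (f : α → β) (k : ℕ) (T : Finset β) (hT : T.card = k) :
    ((Finset.univ.powersetCard k).filter (fun s : Finset α => s.image f = T)).card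
      = ∏ j ∈ T, (Finset.univ.filter (fun i => f i = j)).card := by
  classical
  have key : ∀ s : Finset α,
      s ∈ (Finset.univ.powersetCard k).filter (fun s => s.image f = T) →
      ∀ j ∈ T, ∃! a, a ∈ s ∧ f a = j := by
    intro s hs j hj
    simp only [mem_filter, mem_powersetCard] at hs
    obtain ⟨⟨-, hcard⟩, himg⟩ := hs
    have hinj : Set.InjOn f s := Finset.card_image_iff.mp (by rw [himg, hT, hcard])
    obtain ⟨a, ha, hfa⟩ := Finset.mem_image.mp (himg ▸ hj)
    exact ⟨a, ⟨ha, hfa⟩, fun b hb => hinj hb.1 ha (hb.2.trans hfa.symm)⟩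
  have himage : ∀ p ∈ T.pi (fun j => Finset.univ.filter (fun i => f i = j)),
      T.attach.image (fun j => p j.1 j.2)
        ∈ (Finset.univ.powersetCard k).filter (fun s : Finset α => s.image f = T) := by
    intro p hp
    simp only [Finset.mem_pi, Finset.mem_filter, Finset.mem_univ, true_and] at hp
    have hinj : Set.InjOn (fun j : {x // x ∈ T} => p j.1 j.2) T.attach := by
      intro x hx y hy hxy
      have h2 : f (p x.1 x.2) = f (p y.1 y.2) := congrArg f hxy
      rw [hp x.1 x.2, hp y.1 y.2] at h2
      exact Subtype.ext h2
    have hcard : (T.attach.image (fun j => p j.1 j.2)).card = k := by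
      rw [Finset.card_image_of_injOn hinj, Finset.card_attach, hT]
    have himg : (T.attach.image (fun j => p j.1 j.2)).image f = T := by
      rw [Finset.image_image]
      have h3 : T.attach.image (f ∘ fun j : {x // x ∈ T} => p j.1 j.2)
          = T.attach.image (fun j => j.1) := by
        refine Finset.image_congr ?_
        intro x _
        exact hp x.1 x.2
      rw [h3, Finset.attach_image_val]
    simp only [mem_filter, mem_powersetCard]
    exact ⟨⟨Finset.subset_univ _, hcard⟩, himg⟩
  rw [← Finset.card_pi]
  refine Finset.card_bij'
    (fun s hs => fun j hj => Finset.choose (fun a => f a = j) s (key s hs j hj))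
    (fun p _hp => T.attach.image (fun j => p j.1 j.2)) ?_ ?_ ?_ ?_
  · intro s hs
    simp only [Finset.mem_pi, Finset.mem_filter, Finset.mem_univ, true_and]
    intro j hj
    exact Finset.choose_property _ s (key s hs j hj)
  · intro p hp
    exact himage p hp
  · intro s hs
    have hs' := hs
    simp only [mem_filter, mem_powersetCard] at hs'
    obtain ⟨⟨-, hcard⟩, himg⟩ := hs'
    have hsub : (T.attach.image
        fun j => Finset.choose (fun a => f a = j.1) s (key s hs j.1 j.2)) ⊆ s := by
      intro x hx
      obtain ⟨j, -, rfl⟩ := Finset.mem_image.mp hx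
      exact Finset.choose_mem _ s _
    have hinj : Set.InjOn
        (fun j : {x // x ∈ T} => Finset.choose (fun a => f a = j.1) s (key s hs j.1 j.2))
        T.attach := by
      intro x hx y hy hxy
      have h2 := congrArg f hxy
      rw [Finset.choose_property (fun a => f a = x.1) s (key s hs x.1 x.2),
        Finset.choose_property (fun a => f a = y.1) s (key s hs y.1 y.2)] at h2
      exact Subtype.ext h2
    have hcard2 : (T.attach.image
        fun j => Finset.choose (fun a => f a = j.1) s (key s hs j.1 j.2)).card = s.card := by
      rw [Finset.card_image_of_injOn hinj, Finset.card_attach, hT, hcard]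
    exact Finset.eq_of_subset_of_card_le hsub (le_of_eq hcard2.symm)
  · intro p hp
    have hp' := hp
    simp only [Finset.mem_pi, Finset.mem_filter, Finset.mem_univ, true_and] at hp'
    funext j hj
    have hmem : p j hj ∈ T.attach.image (fun j : {x // x ∈ T} => p j.1 j.2) :=
      Finset.mem_image.mpr ⟨⟨j, hj⟩, Finset.mem_attach _ _, rfl⟩
    refine ((key _ (himage p hp) j hj).unique
      ⟨Finset.choose_mem (fun a => f a = j) _ _,
       Finset.choose_property (fun a => f a = j) _ _⟩ ⟨hmem, hp' j hj⟩)

lemma aux_main (D d de βs βl : ℕ) (hd : 0 < d) (hdD : d ≤ D) (hβs : βs = D / d)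
    (bin : Fin D → Fin d)
    (hfib : ∀ j : Fin d,
      (Finset.univ.filter (fun i => bin i = j)).card
        = if (j : ℕ) < D - d * βs then βl else βs) :
    ((Finset.univ.powersetCard de).filter
        (fun s : Finset (Fin D) => (s.image bin).card = de)).card
      = ∑ i ∈ Finset.range (de + 1),
          (d * (1 + βs) - D).choose i * (D - d * βs).choose (de - i)
            * βs ^ i * βl ^ (de - i) := by
  classical
  subst hβs
  have hmod := Nat.div_add_mod D d
  have hmodlt : D % d < d := Nat.mod_lt _ hd
  have hexp : d * (1 + D / d) = d + d * (D / d) := by ring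
  set L := D - d * (D / d) with hLdef
  have hLd : L < d := by omega
  have hdl : d * (1 + D / d) - D = d - L := by omega
  -- Step A: count = sum over de-subsets of bins of product of fiber sizes
  have hA : ((Finset.univ.powersetCard de).filter
        (fun s : Finset (Fin D) => (s.image bin).card = de)).card
      = ∑ T ∈ (Finset.univ : Finset (Fin d)).powersetCard de,
          ∏ j ∈ T, (Finset.univ.filter (fun i => bin i = j)).card := by
    rw [Finset.card_eq_sum_card_fiberwise
      (f := fun s : Finset (Fin D) => s.image bin)
      (t := (Finset.univ : Finset (Fin d)).powersetCard de)
      (fun s hs => by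
        simp only [mem_filter, mem_powersetCard, Finset.mem_coe] at hs ⊢
        exact ⟨Finset.subset_univ _, hs.2⟩)]
    refine Finset.sum_congr rfl fun T hT => ?_
    have hTcard : T.card = de := (Finset.mem_powersetCard.mp hT).2
    rw [← aux_fiber bin de T hTcard]
    congr 1
    rw [Finset.filter_filter]
    refine Finset.filter_congr fun s hs => ?_
    constructor
    · rintro ⟨-, h⟩; exact h
    · intro h; exact ⟨by rw [h, hTcard], h⟩
  rw [hA]
  -- Step B: rewrite fiber sizes
  have hB : ∑ T ∈ (Finset.univ : Finset (Fin d)).powersetCard de,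
        ∏ j ∈ T, (Finset.univ.filter (fun i => bin i = j)).card
      = ∑ T ∈ (Finset.univ : Finset (Fin d)).powersetCard de,
          ∏ j ∈ T, (if (j : ℕ) < L then βl else D / d) := by
    refine Finset.sum_congr rfl fun T _ => Finset.prod_congr rfl fun j _ => ?_
    rw [hfib j]
  rw [hB, aux_expand]
  -- Step C: split the product
  have hcardS : ((Finset.univ : Finset (Fin d)).filter
      (fun j : Fin d => (j : ℕ) < L)).card = L := by
    have h4 : (Finset.univ : Finset (Fin d)).filter (fun j : Fin d => (j : ℕ) < L)
        = Finset.Iio (⟨L, hLd⟩ : Fin d) := by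
      ext j
      simp [Fin.lt_def]
    rw [h4, Fin.card_Iio]
  have hcardSc : ((Finset.univ : Finset (Fin d)).filter
      (fun j : Fin d => ¬ (j : ℕ) < L)).card = d - L := by
    have h5 := Finset.card_filter_add_card_filter_not
      (s := (Finset.univ : Finset (Fin d))) (p := fun j : Fin d => (j : ℕ) < L)
    rw [hcardS, Finset.card_univ, Fintype.card_fin] at h5
    omega
  have hsplit : ∏ j ∈ (Finset.univ : Finset (Fin d)),
        ((C (if (j : ℕ) < L then βl else D / d) * X + 1) : ℕ[X])
      = (C βl * X + 1) ^ L * (C (D / d) * X + 1) ^ (d - L) := by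
    rw [← Finset.prod_filter_mul_prod_filter_not Finset.univ
      (fun j : Fin d => (j : ℕ) < L)]
    congr 1
    · rw [Finset.prod_congr rfl (fun j hj => by
        rw [if_pos (Finset.mem_filter.mp hj).2]), Finset.prod_const, hcardS]
    · rw [Finset.prod_congr rfl (fun j hj => by
        rw [if_neg (Finset.mem_filter.mp hj).2]), Finset.prod_const, hcardSc]
  rw [hsplit, coeff_mul, Finset.Nat.sum_antidiagonal_eq_sum_range_succ_mk]
  -- Step D: identify coefficients and reindex
  rw [← Finset.sum_range_reflect]
  refine Finset.sum_congr rfl fun i hi => ?_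
  rw [Finset.mem_range] at hi
  have hi' : i ≤ de := by omega
  have h6 : de - (de - i) = i := by omega
  have h7 : de.succ - 1 - i = de - i := by omega
  simp only [h7]
  rw [aux_coeff_pow, aux_coeff_pow, h6, hdl]
  ring


/-- near-balanced bins. `D` input dimensions are partitioned into
`d` bins, `D − d·⌊D/d⌋` of which have size `β_l = ⌈D/d⌉` and the remaining
`d·⌈D/d⌉ − D` have size `β_s = ⌊D/d⌋`. The probability that a uniformly random
`d_e`-subset hits each bin at most once equals
`(∑_{i=0}^{d_e} C(d(1+β_s)−D, i)·C(D−dβ_s, d_e−i)·β_s^i·β_l^{d_e−i}) / C(D,d_e)`. -/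
theorem baxus_near_balanced_success_probability
    (D d de βs βl : ℕ) (hde : 0 < de) (hd : 0 < d) (hdeD : de ≤ d) (hdD : d ≤ D)
    (hβs : βs = D / d) (hβl : βl = (D + d - 1) / d)
    (bin : Fin D → Fin d)
    (hfib : ∀ j : Fin d,
      (Finset.univ.filter (fun i => bin i = j)).card
        = if (j : ℕ) < D - d * βs then βl else βs) :
    (((Finset.univ.powersetCard de).filter
        (fun s : Finset (Fin D) => (s.image bin).card = de)).card : ℝ) /
      (D.choose de : ℝ)
      = ((∑ i ∈ Finset.range (de + 1),
            (d * (1 + βs) - D).choose i * (D - d * βs).choose (de - i)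
              * βs ^ i * βl ^ (de - i) : ℕ) : ℝ) / (D.choose de : ℝ) := by
  have key := aux_main D d de βs βl hd hdD hβs bin hfib
  rw [key]
end

section
/- Fix positive integers d_e ≤ d. For every positive integer D ≥ d, the BAxUS worst-case success probability p_B(D, d, d_e) = (∑_{i=0}^{d_e} C(d(1+⌊D/d⌋)−D, i) · C(D−d⌊D/d⌋, d_e−i) · ⌊D/d⌋^i · ⌈D/d⌉^{d_e−i}) / C(D, d_e) satisfies d!/((d−d_e)!·d^{d_e}) ≤ p_B(D, d, d_e). -/
/-- The BAxUS worst-case success probability for input dimensionality `D`,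
target dimensionality `d`, effective dimensionality `de`, with near-balanced
bins of sizes `β_s = ⌊D/d⌋` and `β_l = ⌈D/d⌉`. -/
noncomputable def pB (D d de : ℕ) : ℝ :=
  ((∑ i ∈ Finset.range (de + 1),
      (d * (1 + D / d) - D).choose i * (D - d * (D / d)).choose (de - i)
        * (D / d) ^ i * ((D + d - 1) / d) ^ (de - i) : ℕ) : ℝ)
    / (D.choose de : ℝ)

def Esum (s a b k : ℕ) : ℕ :=
  ∑ i ∈ Finset.range (k+1), a.choose i * b.choose (k-i) * (s^i * (s+1)^(k-i))

lemma Esum_zero (s a b : ℕ) : Esum s a b 0 = 1 := by simp [Esum]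

lemma Esum_b0 (s a k : ℕ) : Esum s a 0 k = a.choose k * s^k := by
  rw [Esum, Finset.sum_eq_single k]
  · simp
  · intro i hi hne
    have : k - i ≠ 0 := by
      simp at hi; omega
    simp [Nat.choose_eq_zero_of_lt (by omega : (0:ℕ) < k - i), this]
  · intro h; simp at h

lemma Esum_a0 (s b k : ℕ) : Esum s 0 b k = b.choose k * (s+1)^k := by
  rw [Esum, Finset.sum_eq_single 0]
  · simp
  · intro i hi hne
    simp [Nat.choose_eq_zero_of_lt (by omega : (0:ℕ) < i)]
  · intro h; simp at h

lemma P1 (s a b k : ℕ) :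
    Esum s (a+1) b (k+1) = Esum s a b (k+1) + s * Esum s a b k := by
  rw [Esum, Esum, Esum, Finset.sum_range_succ' _ (k+1), Finset.sum_range_succ' _ (k+1)]
  simp only [Nat.choose_succ_succ, Nat.choose_zero_right, Nat.succ_eq_add_one]
  rw [Finset.mul_sum]
  have : ∀ i ∈ Finset.range (k+1),
      (Nat.choose a i + Nat.choose a (i+1)) * b.choose (k+1-(i+1)) * (s^(i+1) * (s+1)^(k+1-(i+1)))
      = a.choose (i+1) * b.choose (k+1-(i+1)) * (s^(i+1) * (s+1)^(k+1-(i+1)))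
        + s * (a.choose i * b.choose (k-i) * (s^i * (s+1)^(k-i))) := by
    intro i hi
    simp at hi
    have h1 : k + 1 - (i+1) = k - i := by omega
    rw [h1]; ring
  rw [Finset.sum_congr rfl this, Finset.sum_add_distrib]
  ring

lemma P2 (s a b k : ℕ) :
    Esum s a (b+1) (k+1) = Esum s a b (k+1) + (s+1) * Esum s a b k := by
  rw [Esum, Esum, Esum, Finset.sum_range_succ _ (k+1), Finset.sum_range_succ _ (k+1)]
  rw [Finset.mul_sum]
  have : ∀ i ∈ Finset.range (k+1),
      a.choose i * (b+1).choose (k+1-i) * (s^i * (s+1)^(k+1-i))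
      = a.choose i * b.choose (k+1-i) * (s^i * (s+1)^(k+1-i))
        + (s+1) * (a.choose i * b.choose (k-i) * (s^i * (s+1)^(k-i))) := by
    intro i hi
    simp at hi
    have h1 : k + 1 - i = (k - i) + 1 := by omega
    rw [h1, Nat.choose_succ_succ]
    ring
  rw [Finset.sum_congr rfl this, Finset.sum_add_distrib]
  simp
  ring

lemma I1 (s a b k : ℕ) :
    Esum s a (b+1) (k+1) = Esum s (a+1) b (k+1) + Esum s a b k := by
  rw [P2, P1]; ring

lemma W2 (s a b k : ℕ) :
    ∑ i ∈ Finset.range (k+2),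
        i * ((a+1).choose i * b.choose (k+1-i) * (s^i * (s+1)^(k+1-i)))
      = (a+1) * s * Esum s a b k := by
  rw [Finset.sum_range_succ' _ (k+1), Esum, Finset.mul_sum]
  have : ∀ i ∈ Finset.range (k+1),
      (i+1) * ((a+1).choose (i+1) * b.choose (k+1-(i+1)) * (s^(i+1) * (s+1)^(k+1-(i+1))))
      = (a+1) * s * (a.choose i * b.choose (k-i) * (s^i * (s+1)^(k-i))) := by
    intro i hi
    simp at hi
    have h1 : k + 1 - (i+1) = k - i := by omega
    have h2 : (i+1) * (a+1).choose (i+1) = (a+1) * a.choose i := by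
      simpa [Nat.succ_eq_add_one, mul_comm] using (Nat.add_one_mul_choose_eq a i).symm
    rw [h1]
    calc (i+1) * ((a+1).choose (i+1) * b.choose (k-i) * (s^(i+1) * (s+1)^(k-i)))
        = ((i+1) * (a+1).choose (i+1)) * (b.choose (k-i) * (s^(i+1) * (s+1)^(k-i))) := by ring
      _ = ((a+1) * a.choose i) * (b.choose (k-i) * (s^(i+1) * (s+1)^(k-i))) := by rw [h2]
      _ = (a+1) * s * (a.choose i * b.choose (k-i) * (s^i * (s+1)^(k-i))) := by ring
  rw [Finset.sum_congr rfl this]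
  simp

lemma W1 (s a b k : ℕ) :
    ∑ i ∈ Finset.range (k+2),
        (k+1-i) * (a.choose i * (b+1).choose (k+1-i) * (s^i * (s+1)^(k+1-i)))
      = (b+1) * (s+1) * Esum s a b k := by
  rw [Finset.sum_range_succ _ (k+1), Esum, Finset.mul_sum]
  have : ∀ i ∈ Finset.range (k+1),
      (k+1-i) * (a.choose i * (b+1).choose (k+1-i) * (s^i * (s+1)^(k+1-i)))
      = (b+1) * (s+1) * (a.choose i * b.choose (k-i) * (s^i * (s+1)^(k-i))) := by
    intro i hi
    simp at hi
    have h1 : k + 1 - i = (k - i) + 1 := by omega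
    have h2 : ((k-i)+1) * (b+1).choose ((k-i)+1) = (b+1) * b.choose (k-i) := by
      simpa [Nat.succ_eq_add_one, mul_comm] using (Nat.add_one_mul_choose_eq b (k-i)).symm
    rw [h1]
    calc ((k-i)+1) * (a.choose i * (b+1).choose ((k-i)+1) * (s^i * (s+1)^((k-i)+1)))
        = (((k-i)+1) * (b+1).choose ((k-i)+1)) * (a.choose i * (s^i * (s+1)^((k-i)+1))) := by ring
      _ = ((b+1) * b.choose (k-i)) * (a.choose i * (s^i * (s+1)^((k-i)+1))) := by rw [h2]
      _ = (b+1) * (s+1) * (a.choose i * b.choose (k-i) * (s^i * (s+1)^(k-i))) := by ring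
  rw [Finset.sum_congr rfl this]
  simp

lemma W0 (s a b k : ℕ) :
    (k+1) * Esum s a b (k+1)
      = (∑ i ∈ Finset.range (k+2),
          i * (a.choose i * b.choose (k+1-i) * (s^i * (s+1)^(k+1-i))))
      + ∑ i ∈ Finset.range (k+2),
          (k+1-i) * (a.choose i * b.choose (k+1-i) * (s^i * (s+1)^(k+1-i))) := by
  rw [Esum, Finset.mul_sum, ← Finset.sum_add_distrib]
  refine Finset.sum_congr rfl fun i hi => ?_
  simp at hi
  rw [← add_mul]
  congr 1
  omega

lemma I2full (s a b k : ℕ) :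
    (k+1) * Esum s (a+1) (b+1) (k+1)
      = (a+1)*s*Esum s a (b+1) k + (b+1)*(s+1)*Esum s (a+1) b k := by
  rw [W0, W2 s a (b+1) k, W1 s (a+1) b k]

lemma I2a' (s a b k : ℕ) :
    (b+1)*(s+1)*Esum s a b k ≤ (k+1) * Esum s a (b+1) (k+1) := by
  rw [W0, ← W1 s a b k]
  exact Nat.le_add_left _ _

lemma KEY (s a b k : ℕ) (hk : k ≤ (a+1)*s + b*(s+1)) :
    ((a+1)*s + b*(s+1) - k) * Esum s a b k ≤ (k+1) * Esum s (a+1) b (k+1) := by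
  set M := (a+1)*s + b*(s+1) with hM
  match k, b with
  | 0, b =>
    have h1 : Esum s (a+1) b 1 = M := by
      simp [Esum, Finset.sum_range_succ, hM]
      ring
    simpa [Esum_zero, h1] using Nat.sub_le M 0
  | k'+1, 0 =>
    have hM0 : M = (a+1)*s := by simp [hM]
    rw [Esum_b0, Esum_b0]
    have h2 : (k'+2) * (a+1).choose (k'+2) = (a+1) * a.choose (k'+1) := by
      simpa [Nat.succ_eq_add_one, mul_comm] using (Nat.add_one_mul_choose_eq a (k'+1)).symm
    calc (M - (k'+1)) * (a.choose (k'+1) * s^(k'+1))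
        ≤ M * (a.choose (k'+1) * s^(k'+1)) :=
          Nat.mul_le_mul_right _ (Nat.sub_le _ _)
      _ = (k'+2) * ((a+1).choose (k'+2) * s^(k'+2)) := by
          rw [hM0]
          calc (a+1)*s * (a.choose (k'+1) * s^(k'+1))
              = ((a+1) * a.choose (k'+1)) * (s * s^(k'+1)) := by ring
            _ = ((k'+2) * (a+1).choose (k'+2)) * (s * s^(k'+1)) := by rw [h2]
            _ = (k'+2) * ((a+1).choose (k'+2) * s^(k'+2)) := by ring
  | k'+1, b'+1 =>
    set X := Esum s a (b'+1) (k'+1) with hX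
    set Y := Esum s (a+1) (b'+1) (k'+2) with hY
    set Z := Esum s a b' k' with hZ
    have e1 : (k'+2) * Y + (b'+1)*(s+1)*Z = M * X := by
      rw [hY, I2full s a b' (k'+1)]
      have hI1 : Esum s (a+1) b' (k'+1) + Z = X := (I1 s a b' k').symm
      calc (a+1)*s*Esum s a (b'+1) (k'+1) + (b'+1)*(s+1)*Esum s (a+1) b' (k'+1)
            + (b'+1)*(s+1)*Z
          = (a+1)*s*X + (b'+1)*(s+1)*(Esum s (a+1) b' (k'+1) + Z) := by rw [← hX]; ring
        _ = (a+1)*s*X + (b'+1)*(s+1)*X := by rw [hI1]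
        _ = M * X := by rw [hM]; ring
    have e2 : (b'+1)*(s+1)*Z ≤ (k'+1) * X := I2a' s a b' k'
    have h3 : (M - (k'+1)) * X + (k'+1) * X = M * X := by
      rw [← add_mul, Nat.sub_add_cancel hk]
    have harith : ∀ p q r w : ℕ, p + q = r + w → w ≤ q → p ≤ r := by omega
    exact harith _ ((k'+1)*X) _ ((b'+1)*(s+1)*Z) (by rw [h3, ← e1]) e2

lemma stepE (s a b k : ℕ) (hk : k + 1 ≤ (a+1)*s + b*(s+1)) :
    Esum s a (b+1) (k+1) * ((a+1)*s + b*(s+1)).choose (k+1)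
      ≤ Esum s (a+1) b (k+1) * ((a+1)*s + b*(s+1) + 1).choose (k+1) := by
  set D := (a+1)*s + b*(s+1) with hD
  set E' := Esum s (a+1) b (k+1) with hE'
  set F := Esum s a b k with hF
  have hI1 : Esum s a (b+1) (k+1) = E' + F := I1 s a b k
  have hPascal : (D+1).choose (k+1) = D.choose k + D.choose (k+1) :=
    Nat.choose_succ_succ D k
  have hsub : F * D.choose (k+1) ≤ E' * D.choose k := by
    have hkey : (D - k) * F ≤ (k+1) * E' := KEY s a b k (by omega)
    have h1 : F * D.choose (k+1) * (k+1) ≤ E' * D.choose k * (k+1) := by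
      calc F * D.choose (k+1) * (k+1) = F * (D.choose (k+1) * (k+1)) := by ring
        _ = F * (D.choose k * (D - k)) := by rw [Nat.choose_succ_right_eq]
        _ = ((D - k) * F) * D.choose k := by ring
        _ ≤ ((k+1) * E') * D.choose k := Nat.mul_le_mul_right _ hkey
        _ = E' * D.choose k * (k+1) := by ring
    exact Nat.le_of_mul_le_mul_right h1 (Nat.succ_pos k)
  calc Esum s a (b+1) (k+1) * D.choose (k+1)
      = E' * D.choose (k+1) + F * D.choose (k+1) := by rw [hI1]; ring
    _ ≤ E' * D.choose (k+1) + E' * D.choose k := Nat.add_le_add_left hsub _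
    _ = E' * (D+1).choose (k+1) := by rw [hPascal]; ring

/-- the numerator of `pB`, in `Esum` form -/
def gnum (d de D : ℕ) : ℕ := Esum (D/d) (d - D%d) (D%d) de

lemma g_step (d k D : ℕ) (hd : 0 < d) (hdD : d ≤ D) (hk : k + 1 ≤ d) :
    gnum d (k+1) (D+1) * D.choose (k+1) ≤ gnum d (k+1) D * (D+1).choose (k+1) := by
  set q := D / d with hq
  set r := D % d with hr
  have hdm : d * q + r = D := Nat.div_add_mod D d
  have hrd : r < d := Nat.mod_lt D hd
  have ha1 : d - r - 1 + 1 = d - r := by omega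
  have hM : (d - r - 1 + 1) * q + r * (q + 1) = D := by
    rw [ha1]
    have h2 : (d - r) * q = d * q - r * q := by rw [Nat.sub_mul]
    have h3 : r * q ≤ d * q := Nat.mul_le_mul_right q (le_of_lt hrd)
    have h4 : r * (q + 1) = r * q + r := by ring
    omega
  have hq1 : 1 ≤ q := Nat.div_pos hdD hd
  have hgD : gnum d (k+1) D = Esum q (d - r - 1 + 1) r (k+1) := by
    rw [ha1]; rfl
  have hgD1 : gnum d (k+1) (D+1) = Esum q (d - r - 1) (r + 1) (k+1) := by
    rcases Nat.lt_or_ge (r+1) d with hc | hc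
    · have hsplit : D + 1 = (r + 1) + d * q := by omega
      have hmod : (D+1) % d = r + 1 := by
        rw [hsplit, Nat.add_mul_mod_self_left, Nat.mod_eq_of_lt hc]
      have hdiv : (D+1) / d = q := by
        rw [hsplit, Nat.add_mul_div_left _ _ hd, Nat.div_eq_of_lt hc]
        omega
      rw [gnum, hdiv, hmod]
      congr 1
    · have hceq : r + 1 = d := by omega
      have hsplit : D + 1 = d * (q+1) := by
        have : d*(q+1) = d*q + d := by ring
        omega
      have hdiv : (D+1) / d = q + 1 := by
        rw [hsplit, Nat.mul_div_cancel_left _ hd]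
      have hmod : (D+1) % d = 0 := by
        rw [hsplit]; exact Nat.mul_mod_right d (q+1)
      rw [gnum, hdiv, hmod]
      have ha0 : d - r - 1 = 0 := by omega
      rw [Nat.sub_zero, ha0, Esum_b0, ← hceq, Esum_a0]
  rw [hgD, hgD1]
  have hle : k + 1 ≤ (d - r - 1 + 1) * q + r * (q+1) := by
    have h9 : d - r ≤ (d - r - 1 + 1) * q := by
      rw [ha1]; exact Nat.le_mul_of_pos_right _ hq1
    have h10 : r ≤ r * (q+1) := Nat.le_mul_of_pos_right _ (by omega)
    omega
  have := stepE q (d - r - 1) r k hle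
  rw [hM] at this
  exact this

lemma g_base (d de D : ℕ) (hd : 0 < d) (hde : de ≤ d) (hdvd : D % d = 0) :
    d.choose de * de.factorial * D.choose de ≤ gnum d de D * d ^ de := by
  have hg : gnum d de D = d.choose de * (D/d)^de := by
    rw [gnum, hdvd, Nat.sub_zero, Esum_b0]
  rw [hg]
  have h1 : (D/d)^de * d^de = D^de := by
    rw [← mul_pow, Nat.div_mul_cancel (Nat.dvd_of_mod_eq_zero hdvd)]
  calc d.choose de * de.factorial * D.choose de
      = d.choose de * (de.factorial * D.choose de) := by ring
    _ = d.choose de * D.descFactorial de := by rw [Nat.descFactorial_eq_factorial_mul_choose]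
    _ ≤ d.choose de * D^de := Nat.mul_le_mul_left _ (Nat.descFactorial_le_pow D de)
    _ = d.choose de * (D/d)^de * d^de := by rw [mul_assoc, h1]

lemma g_main (d k : ℕ) (hk : k + 1 ≤ d) :
    ∀ n D : ℕ, d ≤ D → d - D % d ≤ n →
      d.choose (k+1) * (k+1).factorial * D.choose (k+1) ≤ gnum d (k+1) D * d ^ (k+1) := by
  have hd : 0 < d := by omega
  intro n
  induction n with
  | zero =>
    intro D hdD hm
    have : D % d < d := Nat.mod_lt D hd
    omega
  | succ n ih =>
    intro D hdD hm
    rcases Nat.eq_zero_or_pos (D % d) with h0 | hpos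
    · exact g_base d (k+1) D hd hk h0
    · -- need P (D+1)
      have hrd : D % d < d := Nat.mod_lt D hd
      have hP1 : d.choose (k+1) * (k+1).factorial * (D+1).choose (k+1)
          ≤ gnum d (k+1) (D+1) * d ^ (k+1) := by
        rcases Nat.eq_zero_or_pos ((D+1) % d) with h1 | h1
        · exact g_base d (k+1) (D+1) hd hk h1
        · refine ih (D+1) (by omega) ?_
          have hq := Nat.div_add_mod D d
          have hsplit : D + 1 = (D % d + 1) + d * (D / d) := by omega
          have hlt : D % d + 1 < d := by
            rcases Nat.lt_or_ge (D % d + 1) d with h | h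
            · exact h
            · exfalso
              have hceq : D % d + 1 = d := by omega
              have : (D+1) % d = 0 := by
                rw [hsplit, Nat.add_mul_mod_self_left, hceq, Nat.mod_self]
              omega
          have hmod : (D+1) % d = D % d + 1 := by
            rw [hsplit, Nat.add_mul_mod_self_left, Nat.mod_eq_of_lt hlt]
          omega
      have hstep := g_step d k D hd hdD hk
      have h2 : (d.choose (k+1) * (k+1).factorial * D.choose (k+1)) * (D+1).choose (k+1)
          ≤ (gnum d (k+1) D * d ^ (k+1)) * (D+1).choose (k+1) := by
        calc (d.choose (k+1) * (k+1).factorial * D.choose (k+1)) * (D+1).choose (k+1)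
            = (d.choose (k+1) * (k+1).factorial * (D+1).choose (k+1)) * D.choose (k+1) := by
              ring
          _ ≤ (gnum d (k+1) (D+1) * d ^ (k+1)) * D.choose (k+1) :=
              Nat.mul_le_mul_right _ hP1
          _ = (gnum d (k+1) (D+1) * D.choose (k+1)) * d ^ (k+1) := by ring
          _ ≤ (gnum d (k+1) D * (D+1).choose (k+1)) * d ^ (k+1) :=
              Nat.mul_le_mul_right _ hstep
          _ = (gnum d (k+1) D * d ^ (k+1)) * (D+1).choose (k+1) := by ring
      exact Nat.le_of_mul_le_mul_right h2 (Nat.choose_pos (by omega))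

lemma pBnum_eq (D d de : ℕ) (hd : 0 < d) (hdD : d ≤ D) :
    (∑ i ∈ Finset.range (de + 1),
      (d * (1 + D / d) - D).choose i * (D - d * (D / d)).choose (de - i)
        * (D / d) ^ i * ((D + d - 1) / d) ^ (de - i)) = gnum d de D := by
  set q := D / d with hq
  set r := D % d with hr
  have hdm : d * q + r = D := Nat.div_add_mod D d
  have hrd : r < d := Nat.mod_lt D hd
  have e1 : d * (1 + q) - D = d - r := by
    have : d * (1 + q) = d + d * q := by ring
    omega
  have e2 : D - d * q = r := by
    have : d * q ≤ D := by omega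
    omega
  rcases Nat.eq_zero_or_pos r with h0 | hpos
  · -- r = 0 : both sides equal `C(d,de) * q^de`
    rw [e1, e2, h0, Nat.sub_zero]
    have hrhs : gnum d de D = d.choose de * q ^ de := by
      rw [gnum, ← hr, ← hq, h0, Nat.sub_zero, Esum_b0]
    rw [hrhs, Finset.sum_eq_single de]
    · simp
    · intro i hi hne
      have : 0 < de - i := by simp at hi; omega
      rw [Nat.choose_eq_zero_of_lt (by omega : (0:ℕ) < de - i)]
      ring
    · intro h; simp at h
  · -- r > 0 : ceil = q + 1
    have e3 : (D + d - 1) / d = q + 1 := by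
      have hsplit : D + d - 1 = (r - 1) + d * (q + 1) := by
        have : d * (q+1) = d * q + d := by ring
        omega
      rw [hsplit, Nat.add_mul_div_left _ _ hd, Nat.div_eq_of_lt (by omega)]
      omega
    rw [e1, e2, e3, gnum, ← hq, ← hr]
    rw [Esum]
    refine Finset.sum_congr rfl fun i hi => ?_
    ring


/-- the HeSBO worst-case success probability
`d!/((d−d_e)!·d^{d_e})` is a lower bound for the BAxUS one. -/
theorem hesbo_le_baxus (d de : ℕ) (hde : 0 < de) (hded : de ≤ d) :
    ∀ D : ℕ, d ≤ D →
      (d.factorial : ℝ) / ((d - de).factorial * d ^ de) ≤ pB D d de := by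
  intro D hdD
  have hd : 0 < d := lt_of_lt_of_le hde hded
  obtain ⟨k, rfl⟩ : ∃ k, de = k + 1 := ⟨de - 1, by omega⟩
  have hmain := g_main d k hded d D hdD (by omega)
  -- to ℕ inequality with factorials
  have hnat : d.factorial * D.choose (k+1)
      ≤ gnum d (k+1) D * ((d - (k+1)).factorial * d ^ (k+1)) := by
    calc d.factorial * D.choose (k+1)
        = (d.choose (k+1) * (k+1).factorial * (d - (k+1)).factorial) * D.choose (k+1) := by
          rw [Nat.choose_mul_factorial_mul_factorial hded]
      _ = (d.choose (k+1) * (k+1).factorial * D.choose (k+1)) * (d - (k+1)).factorial := by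
          ring
      _ ≤ (gnum d (k+1) D * d ^ (k+1)) * (d - (k+1)).factorial :=
          Nat.mul_le_mul_right _ hmain
      _ = gnum d (k+1) D * ((d - (k+1)).factorial * d ^ (k+1)) := by ring
  rw [pB, pBnum_eq D d (k+1) hd hdD]
  rw [div_le_div_iff₀ (by positivity) (by exact_mod_cast Nat.choose_pos (le_trans hded hdD))]
  calc (d.factorial : ℝ) * D.choose (k+1)
      ≤ (gnum d (k+1) D : ℝ) * ((d - (k+1)).factorial * d ^ (k+1)) := by exact_mod_cast hnat
    _ = (gnum d (k+1) D : ℝ) * ((d - (k+1)).factorial * d ^ (k+1)) := rfl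
end

section
/- Fix positive integers d_e ≤ d. Then lim_{D → ∞} p_B(D, d, d_e) = d! / ((d − d_e)! · d^{d_e}), where p_B(D, d, d_e) is the near-balanced-bin success probability from the BAxUS embedding. -/
open Filter

section
open Finset



lemma tendsto_ratio_linear (a b : ℝ) :
    Tendsto (fun x : ℝ => (x + a) / (x + b)) atTop (nhds 1) := by
  have h1 : Tendsto (fun x : ℝ => 1 + (a - b) / (x + b)) atTop (nhds (1 + 0)) :=
    tendsto_const_nhds.add
      (Tendsto.div_atTop tendsto_const_nhds (tendsto_atTop_add_const_right _ b tendsto_id))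
  rw [add_zero] at h1
  refine h1.congr' ?_
  filter_upwards [eventually_gt_atTop (-b)] with x hx
  have hxb : x + b ≠ 0 := by linarith
  field_simp
  ring

lemma factor_tendsto (d i : ℕ) (hd : 0 < d) (f : ℕ → ℕ)
    (hlow : ∀ᶠ D : ℕ in atTop, (D : ℝ) - d ≤ d * f D)
    (hhigh : ∀ᶠ D : ℕ in atTop, (d : ℝ) * f D ≤ D + d) :
    Tendsto (fun D : ℕ => (f D : ℝ) / ((D : ℝ) - i)) atTop (nhds (1 / d)) := by
  have hdR : (0 : ℝ) < d := by exact_mod_cast hd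
  have hg : Tendsto (fun D : ℕ => ((D : ℝ) - d) / (d * ((D : ℝ) - i))) atTop (nhds (1 / d)) := by
    have hr : Tendsto (fun x : ℝ => (1 / d) * ((x + (-(d:ℝ))) / (x + (-(i:ℝ))))) atTop
        (nhds ((1 / d) * 1)) := tendsto_const_nhds.mul (tendsto_ratio_linear _ _)
    rw [mul_one] at hr
    have := hr.comp (tendsto_natCast_atTop_atTop (R := ℝ))
    refine this.congr fun D => ?_
    simp only [Function.comp]
    rw [div_mul_div_comm, one_mul]
    ring_nf
  have hh : Tendsto (fun D : ℕ => ((D : ℝ) + d) / (d * ((D : ℝ) - i))) atTop (nhds (1 / d)) := by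
    have hr : Tendsto (fun x : ℝ => (1 / d) * ((x + (d:ℝ)) / (x + (-(i:ℝ))))) atTop
        (nhds ((1 / d) * 1)) := tendsto_const_nhds.mul (tendsto_ratio_linear _ _)
    rw [mul_one] at hr
    have := hr.comp (tendsto_natCast_atTop_atTop (R := ℝ))
    refine this.congr fun D => ?_
    simp only [Function.comp]
    rw [div_mul_div_comm, one_mul]
    ring_nf
  refine tendsto_of_tendsto_of_tendsto_of_le_of_le' hg hh ?_ ?_
  · filter_upwards [hlow, eventually_gt_atTop i] with D h1 h2
    have hpos : (0 : ℝ) < (D : ℝ) - i := by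
      have : (i : ℝ) < D := by exact_mod_cast h2
      linarith
    rw [div_le_div_iff₀ (by positivity) hpos]
    calc ((D : ℝ) - d) * ((D:ℝ) - i) ≤ (d * f D) * ((D:ℝ) - i) := by
          apply mul_le_mul_of_nonneg_right h1 hpos.le
      _ = (f D) * (d * ((D:ℝ) - i)) := by ring
  · filter_upwards [hhigh, eventually_gt_atTop i] with D h1 h2
    have hpos : (0 : ℝ) < (D : ℝ) - i := by
      have : (i : ℝ) < D := by exact_mod_cast h2
      linarith
    rw [div_le_div_iff₀ hpos (by positivity)]
    calc (f D : ℝ) * (d * ((D:ℝ) - i)) = (d * f D) * ((D:ℝ) - i) := by ring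
      _ ≤ ((D:ℝ) + d) * ((D:ℝ) - i) := mul_le_mul_of_nonneg_right h1 hpos.le

open Filter Finset

lemma num_bounds (d de D : ℕ) (hd : 0 < d) :
    d.choose de * (D / d) ^ de ≤
      (∑ i ∈ Finset.range (de + 1),
        (d * (1 + D / d) - D).choose i * (D - d * (D / d)).choose (de - i)
          * (D / d) ^ i * ((D + d - 1) / d) ^ (de - i)) ∧
    (∑ i ∈ Finset.range (de + 1),
        (d * (1 + D / d) - D).choose i * (D - d * (D / d)).choose (de - i)
          * (D / d) ^ i * ((D + d - 1) / d) ^ (de - i)) ≤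
      d.choose de * (D / d + 1) ^ de := by
  set q := D / d with hq
  set r := D % d with hr
  set ql := (D + d - 1) / d with hql
  have hqr : d * q + r = D := Nat.div_add_mod D d
  have hrd : r < d := Nat.mod_lt D hd
  have e1 : d * (1 + q) - D = d - r := by
    rw [Nat.mul_add, Nat.mul_one]; omega
  have e2 : D - d * q = r := by omega
  have hql1 : q ≤ ql := Nat.div_le_div_right (by omega)
  have hql2 : ql ≤ q + 1 := by
    rw [hql, Nat.div_le_iff_le_mul_add_pred hd]
    have hexp : d * (q + 1) = d * q + d := by ring
    omega
  have hV : ∑ i ∈ Finset.range (de + 1), (d - r).choose i * r.choose (de - i)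
      = d.choose de := by
    have h := Nat.add_choose_eq (d - r) r de
    rw [Finset.Nat.sum_antidiagonal_eq_sum_range_succ
      (fun i j => (d - r).choose i * r.choose j)] at h
    rw [Nat.sub_add_cancel hrd.le] at h
    exact h.symm
  simp only [e1, e2]
  constructor
  · calc d.choose de * q ^ de
        = ∑ i ∈ Finset.range (de + 1), (d - r).choose i * r.choose (de - i) * q ^ de := by
          rw [← Finset.sum_mul, hV]
      _ ≤ _ := by
          apply Finset.sum_le_sum
          intro i hi
          have hi' : i ≤ de := Nat.lt_succ_iff.mp (Finset.mem_range.mp hi)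
          have hpow : q ^ de = q ^ i * q ^ (de - i) := by
            rw [← pow_add, Nat.add_sub_cancel' hi']
          rw [hpow, ← mul_assoc]
          exact Nat.mul_le_mul_left _ (Nat.pow_le_pow_left hql1 _)
  · calc (∑ i ∈ Finset.range (de + 1),
          (d - r).choose i * r.choose (de - i) * q ^ i * ql ^ (de - i))
        ≤ ∑ i ∈ Finset.range (de + 1),
            (d - r).choose i * r.choose (de - i) * (q + 1) ^ de := by
          apply Finset.sum_le_sum
          intro i hi
          have hi' : i ≤ de := Nat.lt_succ_iff.mp (Finset.mem_range.mp hi)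
          have hpow : (q + 1) ^ de = (q + 1) ^ i * (q + 1) ^ (de - i) := by
            rw [← pow_add, Nat.add_sub_cancel' hi']
          rw [hpow, ← mul_assoc]
          have h1 : q ^ i ≤ (q + 1) ^ i := Nat.pow_le_pow_left (Nat.le_succ _) _
          have h2 : ql ^ (de - i) ≤ (q + 1) ^ (de - i) := Nat.pow_le_pow_left hql2 _
          exact Nat.mul_le_mul (Nat.mul_le_mul_left _ h1) h2
      _ = d.choose de * (q + 1) ^ de := by rw [← Finset.sum_mul, hV]

lemma bound_tendsto (d de : ℕ) (hd : 0 < d) (hde : de ≤ d) (f : ℕ → ℕ)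
    (hlow : ∀ᶠ D : ℕ in atTop, (D : ℝ) - d ≤ d * f D)
    (hhigh : ∀ᶠ D : ℕ in atTop, (d : ℝ) * f D ≤ D + d) :
    Tendsto (fun D : ℕ => ((d.choose de * (f D) ^ de : ℕ) : ℝ) / (D.choose de : ℝ)) atTop
      (nhds ((d.factorial : ℝ) / ((d - de).factorial * d ^ de))) := by
  have hdR : (0 : ℝ) < d := by exact_mod_cast hd
  have hlim : Tendsto
      (fun D : ℕ => (d.choose de : ℝ) * (de.factorial : ℝ) *
        ∏ i ∈ Finset.range de, (f D : ℝ) / ((D : ℝ) - i)) atTop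
      (nhds ((d.choose de : ℝ) * (de.factorial : ℝ) * (1 / d) ^ de)) := by
    have hp : Tendsto (fun D : ℕ => ∏ i ∈ Finset.range de, (f D : ℝ) / ((D : ℝ) - i)) atTop
        (nhds (∏ _i ∈ Finset.range de, (1 / (d : ℝ)))) :=
      tendsto_finset_prod _ (fun i _ => factor_tendsto d i hd f hlow hhigh)
    rw [Finset.prod_const, Finset.card_range] at hp
    exact tendsto_const_nhds.mul hp
  have hkey : (d.choose de : ℝ) * (de.factorial : ℝ) * (1 / d) ^ de
      = (d.factorial : ℝ) / ((d - de).factorial * d ^ de) := by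
    have h : (d.choose de : ℝ) * de.factorial * (d - de).factorial = d.factorial := by
      exact_mod_cast Nat.choose_mul_factorial_mul_factorial hde
    rw [eq_div_iff (by positivity)]
    calc (d.choose de : ℝ) * de.factorial * (1 / d) ^ de * ((d - de).factorial * d ^ de)
        = ((d.choose de : ℝ) * de.factorial * (d - de).factorial) * ((1 / d * d) ^ de) := by
          rw [mul_pow]; ring
      _ = (d.factorial : ℝ) := by
          rw [h, one_div_mul_cancel hdR.ne', one_pow, mul_one]
  rw [← hkey]
  refine hlim.congr' ?_
  filter_upwards [eventually_ge_atTop de, eventually_ge_atTop 1] with D hD hD1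
  have hfac : ∀ i ∈ Finset.range de, (0:ℝ) < (D : ℝ) - i := by
    intro i hi
    have : (i : ℝ) < de := by exact_mod_cast Finset.mem_range.mp hi
    have : (de : ℝ) ≤ D := by exact_mod_cast hD
    linarith
  have hprodpos : (0:ℝ) < ∏ i ∈ Finset.range de, ((D : ℝ) - i) :=
    Finset.prod_pos hfac
  have hprod : (D.descFactorial de : ℝ) = ∏ i ∈ Finset.range de, ((D : ℝ) - i) := by
    rw [Nat.descFactorial_eq_prod_range, Nat.cast_prod]
    refine Finset.prod_congr rfl fun i hi => ?_
    have hi' : i ≤ D := le_trans (Finset.mem_range.mp hi).le hD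
    exact Nat.cast_sub hi'
  have hchoose : (D.choose de : ℝ) = (∏ i ∈ Finset.range de, ((D : ℝ) - i)) / de.factorial := by
    rw [eq_div_iff (by positivity), ← hprod]
    exact_mod_cast (mul_comm (de.factorial) (D.choose de)) ▸
      (Nat.descFactorial_eq_factorial_mul_choose D de).symm
  have hrw : ∏ i ∈ Finset.range de, ((f D : ℝ) / ((D : ℝ) - i))
      = (f D : ℝ) ^ de / ∏ i ∈ Finset.range de, ((D : ℝ) - i) := by
    rw [Finset.prod_div_distrib, Finset.prod_const, Finset.card_range]
  rw [hrw, hchoose]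
  push_cast
  rw [div_div_eq_mul_div]
  field_simp


end

/-- `lim_{D→∞} p_B(D,d,d_e) = d!/((d−d_e)!·d^{d_e})`. -/
theorem baxus_tendsto_hesbo (d de : ℕ) (hde : 0 < de) (hded : de ≤ d) :
    Tendsto (fun D : ℕ => pB D d de) atTop
      (nhds ((d.factorial : ℝ) / ((d - de).factorial * d ^ de))) := by
  have hd : 0 < d := lt_of_lt_of_le hde hded
  have hdR : (0 : ℝ) < d := by exact_mod_cast hd
  have hlow1 : ∀ D : ℕ, (D : ℝ) - d ≤ d * ((D / d : ℕ) : ℝ) := by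
    intro D
    have h := Nat.lt_div_mul_add (a := D) hd
    have h' : (D : ℝ) < ((D / d : ℕ) : ℝ) * d + d := by exact_mod_cast h
    linarith
  have hhigh1 : ∀ D : ℕ, (d : ℝ) * ((D / d : ℕ) : ℝ) ≤ (D : ℝ) + d := by
    intro D
    have h : D / d * d ≤ D := Nat.div_mul_le_self D d
    have h' : ((D / d : ℕ) : ℝ) * d ≤ D := by exact_mod_cast h
    linarith
  have h1 := bound_tendsto d de hd hded (fun D => D / d)
    (Eventually.of_forall hlow1) (Eventually.of_forall hhigh1)
  have h2 := bound_tendsto d de hd hded (fun D => D / d + 1)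
    (Eventually.of_forall fun D => by
      have := hlow1 D
      push_cast
      nlinarith [hdR])
    (Eventually.of_forall fun D => by
      have h' : ((D / d : ℕ) : ℝ) * d ≤ D := by exact_mod_cast Nat.div_mul_le_self D d
      push_cast
      nlinarith [hdR])
  refine tendsto_of_tendsto_of_tendsto_of_le_of_le' h1 h2 ?_ ?_
  · filter_upwards [eventually_ge_atTop de] with D hD
    have hc : (0 : ℝ) < (D.choose de : ℝ) := by exact_mod_cast Nat.choose_pos hD
    unfold pB
    gcongr
    exact_mod_cast (num_bounds d de D hd).1
  · filter_upwards [eventually_ge_atTop de] with D hD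
    have hc : (0 : ℝ) < (D.choose de : ℝ) := by exact_mod_cast Nat.choose_pos hD
    unfold pB
    gcongr
    exact_mod_cast (num_bounds d de D hd).2
end

section
/- Fix positive integers d_e ≤ d. Then p_B(D, d, d_e) ≤ (D/d)^{d_e} · C(d, d_e) / C(D, d_e) for all D ≥ d, where p_B is the near-balanced-bin success probability. -/
open Finset

/-- Vandermonde in range form. -/
lemma vand (m n K : ℕ) :
    (m + n).choose K = ∑ i ∈ Finset.range (K + 1), m.choose i * n.choose (K - i) := by
  rw [Nat.add_choose_eq, Finset.Nat.sum_antidiagonal_eq_sum_range_succ_mk]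

/-- chain identity without upper hypothesis -/
lemma choose_mul' (b m k : ℕ) (hk : k ≤ m) :
    b.choose m * m.choose k = b.choose k * (b - k).choose (m - k) := by
  rcases le_or_gt m b with h | h
  · exact Nat.choose_mul hk
  · rcases le_or_gt k b with h2 | h2
    · rw [Nat.choose_eq_zero_of_lt h, Nat.choose_eq_zero_of_lt (by omega : b - k < m - k)]
      ring
    · rw [Nat.choose_eq_zero_of_lt h, Nat.choose_eq_zero_of_lt h2]
      ring

lemma inner_id (a b de k : ℕ) (hk : k ≤ de) :
    ∑ i ∈ Finset.range (de + 1), a.choose i * b.choose (de - i) * (de - i).choose k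
      = b.choose k * (a + b - k).choose (de - k) := by
  by_cases hkb : k ≤ b
  · have hsub : Finset.range (de - k + 1) ⊆ Finset.range (de + 1) :=
      Finset.range_subset_range.mpr (by omega)
    rw [← Finset.sum_subset hsub (by
      intro x hx hx'
      simp only [Finset.mem_range] at hx hx'
      rw [Nat.choose_eq_zero_of_lt (by omega : de - x < k), mul_zero])]
    have : ∀ i ∈ Finset.range (de - k + 1),
        a.choose i * b.choose (de - i) * (de - i).choose k
          = b.choose k * (a.choose i * (b - k).choose (de - k - i)) := by
      intro i hi
      simp only [Finset.mem_range] at hi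
      rw [mul_assoc, choose_mul' b (de - i) k (by omega)]
      have : de - i - k = de - k - i := by omega
      rw [this]; ring
    rw [Finset.sum_congr rfl this, ← Finset.mul_sum, ← vand a (b - k) (de - k)]
    congr 2
    omega
  · rw [Nat.choose_eq_zero_of_lt (by omega : b < k), zero_mul]
    apply Finset.sum_eq_zero
    intro i hi
    simp only [Finset.mem_range] at hi
    rcases le_or_gt k (de - i) with h | h
    · rw [Nat.choose_eq_zero_of_lt (by omega : b < de - i)]; ring
    · rw [Nat.choose_eq_zero_of_lt h, mul_zero]

lemma stepA (a b q de : ℕ) :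
    ∑ i ∈ Finset.range (de + 1), a.choose i * b.choose (de - i) * q ^ i * (q + 1) ^ (de - i)
      = ∑ k ∈ Finset.range (de + 1), b.choose k * (a + b - k).choose (de - k) * q ^ (de - k) := by
  have expand : ∀ i ∈ Finset.range (de + 1),
      a.choose i * b.choose (de - i) * q ^ i * (q + 1) ^ (de - i)
        = ∑ k ∈ Finset.range (de + 1),
            a.choose i * b.choose (de - i) * (de - i).choose k * q ^ (de - k) := by
    intro i hi
    simp only [Finset.mem_range] at hi
    rw [add_pow q 1 (de - i)]
    simp only [one_pow, mul_one, Nat.cast_id]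
    rw [Finset.mul_sum]
    have hrefl : ∑ j ∈ Finset.range (de - i + 1),
        a.choose i * b.choose (de - i) * q ^ i * (q ^ j * (de - i).choose j)
        = ∑ k ∈ Finset.range (de - i + 1),
            a.choose i * b.choose (de - i) * (de - i).choose k * q ^ (de - k) := by
      rw [← Finset.sum_range_reflect
        (fun j => a.choose i * b.choose (de - i) * q ^ i * (q ^ j * (de - i).choose j))
        (de - i + 1)]
      apply Finset.sum_congr rfl
      intro k hk
      simp only [Finset.mem_range] at hk
      have h1 : de - i + 1 - 1 - k = de - i - k := by omega
      rw [h1, Nat.choose_symm (by omega : k ≤ de - i)]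
      have h2 : q ^ i * q ^ (de - i - k) = q ^ (de - k) := by
        rw [← pow_add]; congr 1; omega
      calc a.choose i * b.choose (de - i) * q ^ i * (q ^ (de - i - k) * (de - i).choose k)
          = a.choose i * b.choose (de - i) * (de - i).choose k * (q ^ i * q ^ (de - i - k)) := by
            ring
        _ = a.choose i * b.choose (de - i) * (de - i).choose k * q ^ (de - k) := by rw [h2]
    rw [hrefl]
    apply Finset.sum_subset (Finset.range_subset_range.mpr (by omega))
    intro x hx hx'
    simp only [Finset.mem_range] at hx hx'
    rw [Nat.choose_eq_zero_of_lt (by omega : de - i < x), mul_zero, zero_mul]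
  rw [Finset.sum_congr rfl expand, Finset.sum_comm]
  apply Finset.sum_congr rfl
  intro k hk
  simp only [Finset.mem_range] at hk
  rw [← Finset.sum_mul, inner_id a b de k (by omega)]


lemma desc_ratio (r d : ℕ) (hrd : r ≤ d) :
    ∀ k, r.descFactorial k * d ^ k ≤ d.descFactorial k * r ^ k := by
  intro k
  induction k with
  | zero => simp
  | succ k ih =>
    have h1 : (r - k) * d ≤ (d - k) * r := by
      rw [Nat.sub_mul, Nat.sub_mul, mul_comm d r]
      exact Nat.sub_le_sub_left (Nat.mul_le_mul_left k hrd) _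
    calc r.descFactorial (k + 1) * d ^ (k + 1)
        = ((r - k) * d) * (r.descFactorial k * d ^ k) := by
          rw [Nat.descFactorial_succ, pow_succ]; ring
      _ ≤ ((d - k) * r) * (d.descFactorial k * r ^ k) := Nat.mul_le_mul h1 ih
      _ = d.descFactorial (k + 1) * r ^ (k + 1) := by
          rw [Nat.descFactorial_succ, pow_succ]; ring

lemma choose_ratio (r d k : ℕ) (hrd : r ≤ d) :
    r.choose k * d ^ k ≤ d.choose k * r ^ k := by
  refine Nat.le_of_mul_le_mul_left ?_ (Nat.factorial_pos k)
  calc k.factorial * (r.choose k * d ^ k)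
      = r.descFactorial k * d ^ k := by
        rw [Nat.descFactorial_eq_factorial_mul_choose]; ring
    _ ≤ d.descFactorial k * r ^ k := desc_ratio r d hrd k
    _ = k.factorial * (d.choose k * r ^ k) := by
        rw [Nat.descFactorial_eq_factorial_mul_choose]; ring


/-- `p_B(D,d,d_e) ≤ (D/d)^{d_e}·C(d,d_e)/C(D,d_e)` for all `D ≥ d`. -/
theorem baxus_le_balanced_bound (d de : ℕ) (hde : 0 < de) (hded : de ≤ d) :
    ∀ D : ℕ, d ≤ D →
      pB D d de ≤ ((D : ℝ) / d) ^ de * (d.choose de : ℝ) / (D.choose de : ℝ) := by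
  unfold pB
  intro D hDd
  have hd : 0 < d := lt_of_lt_of_le hde hded
  have hqr : d * (D / d) + D % d = D := Nat.div_add_mod D d
  have hrd : D % d < d := Nat.mod_lt _ hd
  have hdist : d * (1 + D / d) = d + d * (D / d) := by ring
  have e1 : d * (1 + D / d) - D = d - D % d := by omega
  have e2 : D - d * (D / d) = D % d := by omega
  have hDpos : 0 < D.choose de := Nat.choose_pos (le_trans hded hDd)
  have hDC : (0:ℝ) < (D.choose de : ℝ) := by exact_mod_cast hDpos
  simp only [e1, e2]
  by_cases hr : D % d = 0
  · have e3 : (D + d - 1) / d = D / d := by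
      have h1 : D + d - 1 = (d - 1) + d * (D / d) := by omega
      rw [h1, Nat.add_mul_div_left _ _ hd, Nat.div_eq_of_lt (by omega), Nat.zero_add]
    simp only [e3, hr]
    have hsum : ∑ i ∈ Finset.range (de + 1),
        (d - 0).choose i * Nat.choose 0 (de - i) * (D / d) ^ i * (D / d) ^ (de - i)
        = d.choose de * (D / d) ^ de := by
      rw [Finset.sum_eq_single de]
      · simp
      · intro i hi hne
        simp only [Finset.mem_range] at hi
        rw [Nat.choose_eq_zero_of_lt (by omega : 0 < de - i)]
        ring
      · intro h
        exact absurd (Finset.self_mem_range_succ de) h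
    rw [hsum]
    have hcast : (D : ℝ) / (d : ℝ) = ((D / d : ℕ) : ℝ) := by
      rw [div_eq_iff (by positivity : (d:ℝ) ≠ 0), mul_comm]
      exact_mod_cast (by omega : D = d * (D / d))
    apply le_of_eq
    rw [hcast]
    push_cast
    ring
  · have e3 : (D + d - 1) / d = D / d + 1 := by
      have h1 : D + d - 1 = (D % d - 1) + d * (D / d + 1) := by
        have hdd : d * (D / d + 1) = d * (D / d) + d := by ring
        omega
      rw [h1, Nat.add_mul_div_left _ _ hd, Nat.div_eq_of_lt (by omega), Nat.zero_add]
    simp only [e3]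
    rw [stepA (d - D % d) (D % d) (D / d) de]
    have hab : d - D % d + D % d = d := by omega
    simp only [hab]
    set S := ∑ k ∈ Finset.range (de + 1),
        (D % d).choose k * (d - k).choose (de - k) * (D / d) ^ (de - k) with hS
    have key : S * d ^ de ≤ d.choose de * D ^ de := by
      rw [hS, Finset.sum_mul]
      have hle : ∀ k ∈ Finset.range (de + 1),
          (D % d).choose k * (d - k).choose (de - k) * (D / d) ^ (de - k) * d ^ de
            ≤ d.choose de * ((D % d) ^ k * (d * (D / d)) ^ (de - k) * de.choose k) := by
        intro k hk
        simp only [Finset.mem_range] at hk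
        have hdpow : d ^ de = d ^ k * d ^ (de - k) := by
          rw [← pow_add]; congr 1; omega
        calc (D % d).choose k * (d - k).choose (de - k) * (D / d) ^ (de - k) * d ^ de
            = ((D % d).choose k * d ^ k)
                * ((d - k).choose (de - k) * ((D / d) ^ (de - k) * d ^ (de - k))) := by
              rw [hdpow]; ring
          _ ≤ (d.choose k * (D % d) ^ k)
                * ((d - k).choose (de - k) * ((D / d) ^ (de - k) * d ^ (de - k))) :=
              Nat.mul_le_mul (choose_ratio _ _ _ (le_of_lt hrd)) (le_refl _)
          _ = d.choose k * (d - k).choose (de - k)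
                * ((D % d) ^ k * ((D / d) ^ (de - k) * d ^ (de - k))) := by ring
          _ = d.choose de * ((D % d) ^ k * (d * (D / d)) ^ (de - k) * de.choose k) := by
              rw [← Nat.choose_mul (n := d) (by omega : k ≤ de), mul_pow]; ring
      have hap : (D % d + d * (D / d)) ^ de
          = ∑ k ∈ Finset.range (de + 1),
              (D % d) ^ k * (d * (D / d)) ^ (de - k) * de.choose k := by
        rw [add_pow]; simp [Nat.cast_id]
      calc ∑ k ∈ Finset.range (de + 1),
            (D % d).choose k * (d - k).choose (de - k) * (D / d) ^ (de - k) * d ^ de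
          ≤ ∑ k ∈ Finset.range (de + 1),
              d.choose de * ((D % d) ^ k * (d * (D / d)) ^ (de - k) * de.choose k) :=
            Finset.sum_le_sum hle
        _ = d.choose de * (D % d + d * (D / d)) ^ de := by rw [← Finset.mul_sum, hap]
        _ = d.choose de * D ^ de := by
            have hDe : D % d + d * (D / d) = D := by omega
            rw [hDe]
    have hfin : (S : ℝ) ≤ ((D : ℝ) / d) ^ de * (d.choose de : ℝ) := by
      rw [div_pow, div_mul_eq_mul_div, le_div_iff₀ (by positivity : (0:ℝ) < (d:ℝ) ^ de)]
      have h2 : (S : ℝ) * (d : ℝ) ^ de ≤ (d.choose de : ℝ) * (D : ℝ) ^ de := by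
        exact_mod_cast key
      exact le_of_le_of_eq h2 (mul_comm _ _)
    exact (div_le_div_iff_of_pos_right hDC).mpr hfin
end

section
/- Let d ≥ 1 and let β = (β_1,…,β_d), γ = (γ_1,…,γ_d) be vectors of nonnegative reals with γ majorized by β. Then for every k with 1 ≤ k ≤ d, the k-th elementary symmetric polynomial satisfies e_k(γ) ≥ e_k(β). -/
/-- The `k`-th elementary symmetric polynomial of `β : Fin d → ℝ`. -/
noncomputable def esymm (d : ℕ) (k : ℕ) (β : Fin d → ℝ) : ℝ :=
  ∑ t ∈ (Finset.univ : Finset (Fin d)).powersetCard k, ∏ i ∈ t, β i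

/-- `γ` is majorized by `β`: for every `k`, the largest sum of `k` entries of
`γ` is at most the largest sum of `k` entries of `β` (expressed via subsets),
and the total sums agree. -/
def Majorizes (d : ℕ) (β γ : Fin d → ℝ) : Prop :=
  (∀ s : Finset (Fin d), ∃ t : Finset (Fin d),
      t.card = s.card ∧ ∑ i ∈ s, γ i ≤ ∑ i ∈ t, β i) ∧
    ∑ i, γ i = ∑ i, β i

open Finset

variable {d : ℕ}

noncomputable def esymmOn (s : Finset (Fin d)) (k : ℕ) (β : Fin d → ℝ) : ℝ :=
  ∑ t ∈ s.powersetCard k, ∏ i ∈ t, β i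

lemma esymmOn_congr {s : Finset (Fin d)} {k : ℕ} {f g : Fin d → ℝ}
    (h : ∀ m ∈ s, f m = g m) : esymmOn s k f = esymmOn s k g := by
  unfold esymmOn
  refine Finset.sum_congr rfl fun t ht => Finset.prod_congr rfl fun i hi => ?_
  exact h i ((Finset.mem_powersetCard.mp ht).1 hi)

lemma esymmOn_nonneg {s : Finset (Fin d)} {k : ℕ} {f : Fin d → ℝ}
    (h : ∀ m ∈ s, 0 ≤ f m) : 0 ≤ esymmOn s k f := by
  unfold esymmOn
  refine Finset.sum_nonneg fun t ht => Finset.prod_nonneg fun i hi => ?_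
  exact h i ((Finset.mem_powersetCard.mp ht).1 hi)

lemma esymmOn_insert {s : Finset (Fin d)} {i : Fin d} (hi : i ∉ s) (k : ℕ) (f : Fin d → ℝ) :
    esymmOn (insert i s) (k + 1) f = esymmOn s (k + 1) f + f i * esymmOn s k f := by
  unfold esymmOn
  rw [Finset.powersetCard_succ_insert hi, Finset.sum_union, Finset.sum_image, Finset.mul_sum]
  · congr 1
    refine Finset.sum_congr rfl fun t ht => ?_
    have hit : i ∉ t := fun hmem => hi ((Finset.mem_powersetCard.mp ht).1 hmem)
    rw [Finset.prod_insert hit]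
  · intro t ht u hu htu
    have hit : i ∉ t := fun hmem => hi ((Finset.mem_powersetCard.mp ht).1 hmem)
    have hiu : i ∉ u := fun hmem => hi ((Finset.mem_powersetCard.mp hu).1 hmem)
    ext a
    constructor
    · intro ha
      have := Finset.mem_insert.mp (htu ▸ Finset.mem_insert_of_mem ha : a ∈ insert i u)
      rcases this with rfl | h
      · exact absurd ha hit
      · exact h
    · intro ha
      have := Finset.mem_insert.mp (htu.symm ▸ Finset.mem_insert_of_mem ha : a ∈ insert i t)
      rcases this with rfl | h
      · exact absurd ha hiu
      · exact h
  · rw [Finset.disjoint_right]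
    intro t ht hts
    obtain ⟨u, hu, rfl⟩ := Finset.mem_image.mp ht
    have : i ∈ s := (Finset.mem_powersetCard.mp hts).1 (Finset.mem_insert_self i u)
    exact hi this

lemma esymmOn_zero (s : Finset (Fin d)) (f : Fin d → ℝ) : esymmOn s 0 f = 1 := by
  simp [esymmOn]

lemma esymmOn_two {s : Finset (Fin d)} {i l : Fin d} (hi : i ∉ s) (hl : l ∉ s) (hil : i ≠ l)
    (k : ℕ) (f : Fin d → ℝ) :
    esymmOn (insert i (insert l s)) (k + 2) f =
      esymmOn s (k + 2) f + (f i + f l) * esymmOn s (k + 1) f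
        + (f i * f l) * esymmOn s k f := by
  have hi' : i ∉ insert l s := by simp [hil, hi]
  rw [esymmOn_insert hi' (k + 1) f, esymmOn_insert hl (k + 1) f, esymmOn_insert hl k f]
  ring

lemma esymmOn_one {s : Finset (Fin d)} {i l : Fin d} (hi : i ∉ s) (hl : l ∉ s) (hil : i ≠ l)
    (f : Fin d → ℝ) :
    esymmOn (insert i (insert l s)) 1 f = esymmOn s 1 f + (f i + f l) := by
  have hi' : i ∉ insert l s := by simp [hil, hi]
  rw [esymmOn_insert hi' 0 f, esymmOn_insert hl 0 f, esymmOn_zero, esymmOn_zero]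
  ring

lemma robinHood {β : Fin d → ℝ} {i l : Fin d} (hil : i ≠ l) (hβ : ∀ m, 0 ≤ β m)
    {t : ℝ} (ht0 : 0 ≤ t) (ht1 : t ≤ β i - β l) (k : ℕ) :
    esymmOn Finset.univ k β ≤
      esymmOn Finset.univ k (Function.update (Function.update β i (β i - t)) l (β l + t)) := by
  set β' := Function.update (Function.update β i (β i - t)) l (β l + t) with hβ'
  have hβ'i : β' i = β i - t := by
    rw [hβ', Function.update_of_ne hil, Function.update_self]
  have hβ'l : β' l = β l + t := by rw [hβ', Function.update_self]
  have hβ'm : ∀ m, m ≠ i → m ≠ l → β' m = β m := by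
    intro m hmi hml
    rw [hβ', Function.update_of_ne hml, Function.update_of_ne hmi]
  set s : Finset (Fin d) := Finset.univ \ {i, l} with hs
  have hi : i ∉ s := by simp [hs]
  have hl : l ∉ s := by simp [hs]
  have huniv : insert i (insert l s) = Finset.univ := by
    ext a
    simp only [Finset.mem_insert, hs, Finset.mem_sdiff, Finset.mem_univ, true_and,
      Finset.mem_insert, Finset.mem_singleton]
    tauto
  have hcongr : ∀ k', esymmOn s k' β' = esymmOn s k' β := by
    intro k'
    refine esymmOn_congr fun m hm => ?_
    have : m ≠ i ∧ m ≠ l := by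
      simpa [hs, Finset.mem_sdiff] using hm
    exact hβ'm m this.1 this.2
  have hsum : β' i + β' l = β i + β l := by rw [hβ'i, hβ'l]; ring
  have hprod : β i * β l ≤ β' i * β' l := by
    rw [hβ'i, hβ'l]; nlinarith
  have hnn : ∀ m ∈ s, 0 ≤ β m := fun m _ => hβ m
  rw [← huniv]
  match k with
  | 0 => rw [esymmOn_zero, esymmOn_zero]
  | 1 => rw [esymmOn_one hi hl hil, esymmOn_one hi hl hil, hcongr, hsum]
  | (k + 2) =>
    rw [esymmOn_two hi hl hil, esymmOn_two hi hl hil, hcongr, hcongr, hcongr]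
    have h1 : 0 ≤ esymmOn s (k + 1) β := esymmOn_nonneg hnn
    have h2 : 0 ≤ esymmOn s k β := esymmOn_nonneg hnn
    nlinarith [hprod, hsum]

def Sinit (d k : ℕ) : Finset (Fin d) := Finset.univ.filter (fun i => (i : ℕ) < k)

noncomputable def PS (g : Fin d → ℝ) (k : ℕ) : ℝ := ∑ i ∈ Sinit d k, g i

lemma Sinit_univ : Sinit d d = Finset.univ := by
  ext i; simp [Sinit, i.2]

lemma mem_Sinit {k : ℕ} {i : Fin d} : i ∈ Sinit d k ↔ (i : ℕ) < k := by
  simp [Sinit]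

lemma Sinit_succ {k : ℕ} (h : k < d) :
    Sinit d (k + 1) = insert ⟨k, h⟩ (Sinit d k) := by
  ext i
  simp only [mem_Sinit, Finset.mem_insert, Fin.ext_iff]
  omega

lemma PS_succ (g : Fin d → ℝ) {k : ℕ} (h : k < d) :
    PS g (k + 1) = PS g k + g ⟨k, h⟩ := by
  rw [PS, Sinit_succ h, Finset.sum_insert (by simp [mem_Sinit]), PS]
  ring

lemma Sinit_map {c : ℕ} (hc : c ≤ d) :
    Sinit d c = Finset.univ.map (Fin.castLEEmb hc) := by
  ext i
  simp only [mem_Sinit, Finset.mem_map, Finset.mem_univ, true_and]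
  constructor
  · intro h
    exact ⟨⟨(i : ℕ), h⟩, by simp [Fin.ext_iff]⟩
  · rintro ⟨j, rfl⟩
    simpa using j.2

lemma card_Sinit (k : ℕ) : (Sinit d k).card = min k d := by
  rcases le_total k d with h | h
  · rw [Sinit_map h, Finset.card_map, Finset.card_univ, Fintype.card_fin, min_eq_left h]
  · have : Sinit d k = Finset.univ := by ext i; simp [mem_Sinit]; omega
    rw [this, Finset.card_univ, Fintype.card_fin, min_eq_right h]

lemma PS_min (g : Fin d → ℝ) (k : ℕ) : PS g k = PS g (min k d) := by
  unfold PS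
  congr 1
  ext i
  have := i.2
  simp only [mem_Sinit]
  omega

lemma strictMono_val_le {c : ℕ} (f : Fin c ↪o Fin d) :
    ∀ m (h : m < c), m ≤ ((f ⟨m, h⟩ : Fin d) : ℕ) := by
  intro m
  induction m with
  | zero => intro h; exact Nat.zero_le _
  | succ m ih =>
    intro h
    have h' : m < c := Nat.lt_of_succ_lt h
    have hlt : ((f ⟨m, h'⟩ : Fin d) : ℕ) < ((f ⟨m + 1, h⟩ : Fin d) : ℕ) := by
      exact f.strictMono (by simp [Fin.lt_def])
    have := ih h'
    omega

lemma sum_le_PS {g : Fin d → ℝ} (hg : Antitone g) (u : Finset (Fin d)) :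
    ∑ i ∈ u, g i ≤ PS g u.card := by
  set c := u.card with hc
  have hcd : c ≤ d := by
    rw [hc]
    calc u.card ≤ (Finset.univ : Finset (Fin d)).card := Finset.card_le_card (Finset.subset_univ u)
    _ = d := by rw [Finset.card_univ, Fintype.card_fin]
  have hu : u = Finset.univ.map (u.orderEmbOfFin hc.symm).toEmbedding := by
    ext i
    simp only [Finset.mem_map, Finset.mem_univ, true_and]
    constructor
    · intro h
      have : i ∈ Set.range (u.orderEmbOfFin hc.symm) := by
        rw [Finset.range_orderEmbOfFin]; exact h
      obtain ⟨j, hj⟩ := this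
      exact ⟨j, hj⟩
    · rintro ⟨j, rfl⟩
      exact Finset.orderEmbOfFin_mem u hc.symm j
  rw [hu, Finset.sum_map, PS, Sinit_map hcd, Finset.sum_map]
  refine Finset.sum_le_sum fun j _ => ?_
  refine hg ?_
  rw [Fin.le_def]
  have := strictMono_val_le (u.orderEmbOfFin hc.symm) (j : ℕ) j.2
  simpa [Fin.castLEEmb] using this

lemma PS_update (g : Fin d → ℝ) (a : Fin d) (x : ℝ) (k : ℕ) :
    PS (Function.update g a x) k =
      if (a : ℕ) < k then PS g k + (x - g a) else PS g k := by
  by_cases h : (a : ℕ) < k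
  · have ha : a ∈ Sinit d k := mem_Sinit.mpr h
    rw [if_pos h, PS, Finset.sum_update_of_mem ha, PS,
      ← Finset.sum_erase_add _ _ ha, Finset.sdiff_singleton_eq_erase]
    ring
  · have ha : a ∉ Sinit d k := fun hm => h (mem_Sinit.mp hm)
    rw [if_neg h, PS, Finset.sum_update_of_notMem ha, PS]

lemma PS_univ (g : Fin d → ℝ) : PS g d = ∑ i, g i := by
  rw [PS, Sinit_univ]

lemma main_sorted : ∀ (N : ℕ) (β γ : Fin d → ℝ), Antitone β → Antitone γ →
    (∀ m, 0 ≤ β m) → (∀ m, 0 ≤ γ m) →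
    (∀ k, PS γ k ≤ PS β k) → PS γ d = PS β d →
    ((Finset.univ.filter (fun m => β m ≠ γ m)).card ≤ N) →
    ∀ k, esymmOn Finset.univ k β ≤ esymmOn Finset.univ k γ := by
  intro N
  induction N with
  | zero =>
    intro β γ _ _ _ _ _ _ hcard k
    have hempty : (Finset.univ.filter (fun m => β m ≠ γ m)) = ∅ :=
      Finset.card_eq_zero.mp (Nat.le_zero.mp hcard)
    have : β = γ := by
      funext m
      by_contra hne
      have : m ∈ Finset.univ.filter (fun m => β m ≠ γ m) := by
        simp [hne]
      rw [hempty] at this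
      exact absurd this (Finset.notMem_empty m)
    rw [this]
  | succ N ih =>
    intro β γ hβa hγa hβ0 hγ0 hPS htot hcard k
    by_cases hM : (Finset.univ.filter (fun m => β m ≠ γ m)) = ∅
    · have : β = γ := by
        funext m
        by_contra hne
        have : m ∈ Finset.univ.filter (fun m => β m ≠ γ m) := by simp [hne]
        rw [hM] at this
        exact absurd this (Finset.notMem_empty m)
      rw [this]
    -- there is a mismatch
    have hsumzero : ∑ m, (β m - γ m) = 0 := by
      rw [Finset.sum_sub_distrib, ← PS_univ, ← PS_univ, htot]
      ring
    have hFl : (Finset.univ.filter (fun m => β m < γ m)).Nonempty := by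
      rw [Finset.filter_nonempty_iff]
      by_contra hno
      push_neg at hno
      have hall : ∀ m, β m = γ m := by
        have h1 : ∀ m ∈ (Finset.univ : Finset (Fin d)), 0 ≤ β m - γ m := by
          intro m _
          have := hno m (Finset.mem_univ m)
          linarith
        intro m
        have := (Finset.sum_eq_zero_iff_of_nonneg h1).mp hsumzero m (Finset.mem_univ m)
        linarith
      apply hM
      rw [Finset.filter_eq_empty_iff]
      intro m _
      simp [hall m]
    set l : Fin d := (Finset.univ.filter (fun m => β m < γ m)).min' hFl with hl
    have hlmem : β l < γ l := by
      have := Finset.mem_filter.mp (Finset.min'_mem _ hFl)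
      exact this.2
    have hlmin : ∀ m, m < l → γ m ≤ β m := by
      intro m hm
      by_contra hc
      push_neg at hc
      have : l ≤ m := Finset.min'_le _ m (Finset.mem_filter.mpr ⟨Finset.mem_univ m, hc⟩)
      exact absurd hm (not_lt.mpr this)
    -- partial sums strictly above before l
    have hslack : γ l - β l ≤ PS β (l : ℕ) - PS γ (l : ℕ) := by
      have h1 := hPS ((l : ℕ) + 1)
      rw [PS_succ γ l.2, PS_succ β l.2] at h1
      simp only [Fin.eta] at h1
      linarith
    have hFi : (Finset.univ.filter (fun m => m < l ∧ γ m < β m)).Nonempty := by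
      by_contra hno
      rw [Finset.not_nonempty_iff_eq_empty, Finset.filter_eq_empty_iff] at hno
      have h1 : ∀ m ∈ Sinit d (l : ℕ), β m - γ m ≤ 0 := by
        intro m hm
        have hml : m < l := by
          rw [Fin.lt_def]; exact mem_Sinit.mp hm
        have h3 := hno (Finset.mem_univ m)
        push_neg at h3
        have := h3 hml
        linarith
      have h2 : PS β (l : ℕ) - PS γ (l : ℕ) ≤ 0 := by
        rw [PS, PS, ← Finset.sum_sub_distrib]
        exact Finset.sum_nonpos h1
      linarith
    set i : Fin d := (Finset.univ.filter (fun m => m < l ∧ γ m < β m)).max' hFi with hi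
    have himem : i < l ∧ γ i < β i := by
      have := Finset.mem_filter.mp (Finset.max'_mem _ hFi)
      exact this.2
    have hil : i < l := himem.1
    have hgap : ∀ m, i < m → m < l → β m = γ m := by
      intro m h1 h2
      rcases lt_trichotomy (β m) (γ m) with h | h | h
      · have : l ≤ m := Finset.min'_le _ m (Finset.mem_filter.mpr ⟨Finset.mem_univ m, h⟩)
        exact absurd h2 (not_lt.mpr this)
      · exact h
      · have : m ≤ i := Finset.le_max' _ m (Finset.mem_filter.mpr ⟨Finset.mem_univ m, h2, h⟩)
        exact absurd h1 (not_lt.mpr this)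
    set t₀ : ℝ := min (β i - γ i) (γ l - β l) with ht₀
    have ht₀pos : 0 < t₀ := lt_min (by linarith [himem.2]) (by linarith)
    have ht₀i : t₀ ≤ β i - γ i := min_le_left _ _
    have ht₀l : t₀ ≤ γ l - β l := min_le_right _ _
    have hine : i ≠ l := ne_of_lt hil
    set β' : Fin d → ℝ := Function.update (Function.update β i (β i - t₀)) l (β l + t₀)
      with hβ'def
    have hβ'i : β' i = β i - t₀ := by
      rw [hβ'def, Function.update_of_ne hine, Function.update_self]
    have hβ'l : β' l = β l + t₀ := by rw [hβ'def, Function.update_self]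
    have hβ'm : ∀ m, m ≠ i → m ≠ l → β' m = β m := by
      intro m hmi hml
      rw [hβ'def, Function.update_of_ne hml, Function.update_of_ne hmi]
    have hγil : γ l ≤ γ i := hγa (le_of_lt hil)
    have A1 : γ i ≤ β' i := by rw [hβ'i]; linarith
    have A2 : β' i ≤ β i := by rw [hβ'i]; linarith
    have A3 : β l ≤ β' l := by rw [hβ'l]; linarith
    have A4 : β' l ≤ γ l := by rw [hβ'l]; linarith
    -- β' is antitone
    have hβ'a : Antitone β' := by
      intro m n hmn
      rcases eq_or_lt_of_le hmn with rfl | hlt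
      · exact le_refl _
      by_cases hni : n = i
      · have hmi' : m < i := hni ▸ hlt
        rw [hni, hβ'm m (ne_of_lt hmi') (ne_of_lt (lt_trans hmi' hil))]
        calc β' i ≤ β i := A2
          _ ≤ β m := hβa (le_of_lt hmi')
      by_cases hnl : n = l
      · rw [hnl]
        by_cases hmi : m = i
        · rw [hmi]
          calc β' l ≤ γ l := A4
            _ ≤ γ i := hγil
            _ ≤ β' i := A1
        · have hml' : m < l := hnl ▸ hlt
          rw [hβ'm m hmi (ne_of_lt hml')]
          rcases lt_trichotomy m i with h | h | h
          · calc β' l ≤ γ l := A4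
              _ ≤ γ i := hγil
              _ ≤ β i := le_of_lt himem.2
              _ ≤ β m := hβa (le_of_lt h)
          · exact absurd h hmi
          · calc β' l ≤ γ l := A4
              _ ≤ γ m := hγa (le_of_lt hml')
              _ = β m := (hgap m h hml').symm
      · rw [hβ'm n hni hnl]
        by_cases hmi : m = i
        · have hin : i < n := hmi ▸ hlt
          rw [hmi]
          rcases lt_trichotomy n l with h | h | h
          · calc β n = γ n := hgap n hin h
              _ ≤ γ i := hγa (le_of_lt hin)
              _ ≤ β' i := A1
          · exact absurd h hnl
          · calc β n ≤ β l := hβa (le_of_lt h)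
              _ ≤ γ l := le_of_lt hlmem
              _ ≤ γ i := hγil
              _ ≤ β' i := A1
        by_cases hml : m = l
        · have hln : l < n := hml ▸ hlt
          rw [hml]
          calc β n ≤ β l := hβa (le_of_lt hln)
            _ ≤ β' l := A3
        · rw [hβ'm m hmi hml]
          exact hβa hmn
    -- β' is nonnegative
    have hβ'0 : ∀ m, 0 ≤ β' m := by
      intro m
      by_cases hmi : m = i
      · rw [hmi]; linarith [A1, hγ0 i]
      by_cases hml : m = l
      · rw [hml]; linarith [A3, hβ0 l]
      · rw [hβ'm m hmi hml]; exact hβ0 m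
    -- partial sums of β'
    have hPSβ' : ∀ k', PS β' k' =
        PS β k' + (if (l : ℕ) < k' then t₀ else 0) - (if (i : ℕ) < k' then t₀ else 0) := by
      intro k'
      rw [hβ'def, PS_update, PS_update, Function.update_of_ne (Ne.symm hine)]
      split_ifs <;> ring
    have hilv : (i : ℕ) < (l : ℕ) := hil
    have hkey : ∀ k', (i : ℕ) < k' → k' ≤ (l : ℕ) → t₀ ≤ PS β k' - PS γ k' := by
      intro k' hk1 hk2
      set δ : Fin d → ℝ := fun m => β m - γ m with hδ
      have hPSδ : ∀ j, PS δ j = PS β j - PS γ j := by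
        intro j; rw [PS, PS, PS, ← Finset.sum_sub_distrib]
      have hsub : Sinit d ((i : ℕ) + 1) ⊆ Sinit d k' := by
        intro m hm; rw [mem_Sinit] at *; omega
      have hzero : ∀ m ∈ Sinit d k' \ Sinit d ((i : ℕ) + 1), δ m = 0 := by
        intro m hm
        rw [Finset.mem_sdiff, mem_Sinit, mem_Sinit] at hm
        have him : i < m := by rw [Fin.lt_def]; omega
        have hml : m < l := by rw [Fin.lt_def]; omega
        have := hgap m him hml
        simp [hδ, this]
      have h1 : PS δ k' = PS δ ((i : ℕ) + 1) := by
        rw [PS, PS, ← Finset.sum_sdiff hsub, Finset.sum_eq_zero hzero, zero_add]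
      have h2 : PS δ ((i : ℕ) + 1) = PS δ (i : ℕ) + δ i := by
        rw [PS_succ δ i.2]
      have h3 : 0 ≤ PS δ (i : ℕ) := by rw [hPSδ]; linarith [hPS (i : ℕ)]
      have h4 : t₀ ≤ δ i := by simp only [hδ]; linarith
      have h5 := hPSδ k'
      rw [h1, h2] at h5
      linarith
    have hPS' : ∀ k', PS γ k' ≤ PS β' k' := by
      intro k'
      rw [hPSβ' k']
      by_cases hk1 : (i : ℕ) < k'
      · by_cases hk2 : (l : ℕ) < k'
        · rw [if_pos hk1, if_pos hk2]; linarith [hPS k']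
        · rw [if_pos hk1, if_neg hk2]
          have := hkey k' hk1 (not_lt.mp hk2)
          linarith
      · have hk2 : ¬ (l : ℕ) < k' := by omega
        rw [if_neg hk1, if_neg hk2]; linarith [hPS k']
    have htot' : PS γ d = PS β' d := by
      rw [hPSβ' d, if_pos l.2, if_pos i.2, htot]; ring
    -- the mismatch set shrinks
    have hsubM : Finset.univ.filter (fun m => β' m ≠ γ m) ⊆
        Finset.univ.filter (fun m => β m ≠ γ m) := by
      intro m hm
      rw [Finset.mem_filter] at hm ⊢
      refine ⟨Finset.mem_univ m, fun heq => ?_⟩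
      have hmi : m ≠ i := by intro h; rw [h] at heq; linarith [himem.2]
      have hml : m ≠ l := by intro h; rw [h] at heq; linarith [hlmem]
      exact hm.2 (by rw [hβ'm m hmi hml]; exact heq)
    have hssub : Finset.univ.filter (fun m => β' m ≠ γ m) ⊂
        Finset.univ.filter (fun m => β m ≠ γ m) := by
      rw [Finset.ssubset_iff_of_subset hsubM]
      rcases min_cases (β i - γ i) (γ l - β l) with ⟨he, _⟩ | ⟨he, _⟩
      · refine ⟨i, ?_, ?_⟩
        · rw [Finset.mem_filter]
          exact ⟨Finset.mem_univ i, ne_of_gt himem.2⟩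
        · rw [Finset.mem_filter]
          push_neg
          intro _
          rw [hβ'i, ht₀, he]
          ring
      · refine ⟨l, ?_, ?_⟩
        · rw [Finset.mem_filter]
          exact ⟨Finset.mem_univ l, ne_of_lt hlmem⟩
        · rw [Finset.mem_filter]
          push_neg
          intro _
          rw [hβ'l, ht₀, he]
          ring
    have hcardN : (Finset.univ.filter (fun m => β' m ≠ γ m)).card ≤ N := by
      have := Finset.card_lt_card hssub
      omega
    have ht₀le : t₀ ≤ β i - β l := by linarith
    calc esymmOn Finset.univ k β ≤ esymmOn Finset.univ k β' := by
          rw [hβ'def]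
          exact robinHood hine hβ0 (le_of_lt ht₀pos) ht₀le k
      _ ≤ esymmOn Finset.univ k γ := ih β' γ hβ'a hγa hβ'0 hγ0 hPS' htot' hcardN k

lemma esymmOn_perm (k : ℕ) (β : Fin d → ℝ) (σ : Equiv.Perm (Fin d)) :
    esymmOn Finset.univ k (β ∘ σ) = esymmOn Finset.univ k β := by
  have h1 : ∀ f : Fin d → ℝ, esymmOn Finset.univ k f =
      ((Finset.univ : Finset (Fin d)).val.map f).esymm k := by
    intro f
    rw [Finset.esymm_map_val]
    rfl
  rw [h1, h1]
  congr 1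
  have : (Finset.univ : Finset (Fin d)).val.map (β ∘ σ) =
      ((Finset.univ : Finset (Fin d)).val.map σ).map β := by
    rw [Multiset.map_map]
  rw [this]
  congr 1
  have := Finset.map_univ_equiv σ
  calc (Finset.univ : Finset (Fin d)).val.map σ
      = ((Finset.univ : Finset (Fin d)).map σ.toEmbedding).val := by
        rw [Finset.map_val]; rfl
    _ = (Finset.univ : Finset (Fin d)).val := by rw [this]

/-- Schur-concavity of the elementary symmetric polynomials on
the nonnegative orthant: if `γ ≺ β` then `e_k(γ) ≥ e_k(β)` for `1 ≤ k ≤ d`. -/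
theorem esymm_schur_concave (d : ℕ) (hd : 1 ≤ d) (β γ : Fin d → ℝ)
    (hβ : ∀ i, 0 ≤ β i) (hγ : ∀ i, 0 ≤ γ i) (hmaj : Majorizes d β γ) :
    ∀ k, 1 ≤ k → k ≤ d → esymm d k β ≤ esymm d k γ := by
  intro k _ _
  obtain ⟨hsub, htot⟩ := hmaj
  set σ : Equiv.Perm (Fin d) := Tuple.sort (fun j => -β j) with hσ
  set τ : Equiv.Perm (Fin d) := Tuple.sort (fun j => -γ j) with hτ
  set βs : Fin d → ℝ := β ∘ σ with hβs
  set γs : Fin d → ℝ := γ ∘ τ with hγs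
  have hβsa : Antitone βs := by
    intro a b hab
    have := Tuple.monotone_sort (fun j => -β j) hab
    simp only [Function.comp_apply] at this ⊢
    have : -β (σ a) ≤ -β (σ b) := this
    simp only [hβs, Function.comp_apply]
    linarith
  have hγsa : Antitone γs := by
    intro a b hab
    have := Tuple.monotone_sort (fun j => -γ j) hab
    simp only [Function.comp_apply] at this
    have : -γ (τ a) ≤ -γ (τ b) := this
    simp only [hγs, Function.comp_apply]
    linarith
  have hβs0 : ∀ m, 0 ≤ βs m := fun m => hβ _
  have hγs0 : ∀ m, 0 ≤ γs m := fun m => hγ _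
  -- total sums
  have htots : PS γs d = PS βs d := by
    rw [PS_univ, PS_univ, hβs, hγs]
    have h1 : ∑ m, γ (τ m) = ∑ m, γ m := Equiv.sum_comp τ γ
    have h2 : ∑ m, β (σ m) = ∑ m, β m := Equiv.sum_comp σ β
    simp only [Function.comp_apply]
    rw [h1, h2, htot]
  -- partial sums
  have hPSs : ∀ k', PS γs k' ≤ PS βs k' := by
    intro k'
    have hγeq : PS γs k' = ∑ m ∈ (Sinit d k').image τ, γ m := by
      rw [Finset.sum_image (fun a _ b _ h => τ.injective h), PS]
      rfl
    obtain ⟨t, htc, htle⟩ := hsub ((Sinit d k').image τ)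
    have htc' : t.card = (Sinit d k').card := by
      rw [htc, Finset.card_image_of_injective _ τ.injective]
    have hβeq : ∑ a ∈ t, β a = ∑ m ∈ t.image σ.symm, βs m := by
      rw [Finset.sum_image (fun a _ b _ h => σ.symm.injective h)]
      refine Finset.sum_congr rfl fun a _ => ?_
      simp [hβs]
    have hcard2 : (t.image σ.symm).card = (Sinit d k').card := by
      rw [Finset.card_image_of_injective _ σ.symm.injective, htc']
    have h3 : ∑ m ∈ t.image σ.symm, βs m ≤ PS βs ((t.image σ.symm).card) :=
      sum_le_PS hβsa _
    have h4 : PS βs ((t.image σ.symm).card) = PS βs k' := by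
      rw [hcard2, card_Sinit, ← PS_min]
    rw [hγeq]
    calc ∑ m ∈ (Sinit d k').image τ, γ m ≤ ∑ a ∈ t, β a := htle
      _ = ∑ m ∈ t.image σ.symm, βs m := hβeq
      _ ≤ PS βs k' := h4 ▸ h3
  have hmain := main_sorted ((Finset.univ.filter (fun m => βs m ≠ γs m)).card)
    βs γs hβsa hγsa hβs0 hγs0 hPSs htots (le_refl _) k
  have e1 : esymm d k β = esymmOn Finset.univ k βs := by
    rw [hβs, esymmOn_perm]; rfl
  have e2 : esymm d k γ = esymmOn Finset.univ k γs := by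
    rw [hγs, esymmOn_perm]; rfl
  rw [e1, e2]
  exact hmain
end

section
/- For every positive integer x, the Stirling error term r(x) = x! / (√(2πx) · (x/e)^x) satisfies exp(1/(12x+1)) ≤ r(x) ≤ exp(1/(12x)). -/
open Real

open scoped Topology

namespace RobbinsAux

open Filter Nat Stirling Finset

lemma pow_three_ge (k : ℕ) : 2 * k + 3 ≤ 3 ^ (k + 1) := by
  have h : k < 3 ^ k := Nat.lt_pow_self (by norm_num : 1 < 3)
  calc 2 * k + 3 ≤ 3 * (k + 1) := by omega
    _ ≤ 3 * 3 ^ k := by omega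
    _ = 3 ^ (k + 1) := by ring

lemma alg1 (M : ℝ) (hM : 1 ≤ M) :
    ((1 : ℝ) / (2 * M + 1)) ^ 2 / 3 / (1 - ((1 : ℝ) / (2 * M + 1)) ^ 2 / 3) =
      1 / (12 * M ^ 2 + 12 * M + 2) := by
  have hq : (0 : ℝ) < 2 * M + 1 := by nlinarith
  have htle : ((1 : ℝ) / (2 * M + 1)) ^ 2 ≤ 1 := by
    rw [div_pow, one_pow, div_le_one (by positivity)]
    nlinarith
  have hB : (0 : ℝ) < 1 - ((1 : ℝ) / (2 * M + 1)) ^ 2 / 3 := by linarith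
  have hD : (0 : ℝ) < 12 * M ^ 2 + 12 * M + 2 := by nlinarith
  rw [div_eq_div_iff hB.ne' hD.ne']
  field_simp
  ring

lemma alg2 (M : ℝ) (hM : 1 ≤ M) :
    (1 / 3 : ℝ) * (((1 : ℝ) / (2 * M + 1)) ^ 2 / (1 - ((1 : ℝ) / (2 * M + 1)) ^ 2)) =
      1 / (12 * M) - 1 / (12 * (M + 1)) := by
  have hq : (0 : ℝ) < 2 * M + 1 := by nlinarith
  have hB : (0 : ℝ) < 1 - ((1 : ℝ) / (2 * M + 1)) ^ 2 := by
    have : ((1 : ℝ) / (2 * M + 1)) ^ 2 < 1 := by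
      rw [div_pow, one_pow, div_lt_one (by positivity)]
      nlinarith
    linarith
  have h5 : (0 : ℝ) < 12 * M := by nlinarith
  have h6 : (0 : ℝ) < 12 * (M + 1) := by nlinarith
  rw [div_sub_div _ _ h5.ne' h6.ne', one_div_mul_eq_div, div_div,
    div_eq_div_iff (by positivity) (by positivity)]
  field_simp
  ring

/-- lower geometric bound on the log-difference -/
lemma diff_ge (m : ℕ) :
    (((1 : ℝ) / (2 * ↑(m + 1) + 1)) ^ 2 / 3) / (1 - ((1 : ℝ) / (2 * ↑(m + 1) + 1)) ^ 2 / 3) ≤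
      Real.log (stirlingSeq (m + 1)) - Real.log (stirlingSeq (m + 2)) := by
  set t : ℝ := ((1 : ℝ) / (2 * ↑(m + 1) + 1)) ^ 2 with ht
  have ht0 : 0 ≤ t := sq_nonneg _
  have ht1 : t < 1 := by
    rw [ht, one_div, inv_pow]
    exact inv_lt_one_of_one_lt₀
      (one_lt_pow₀ (by push_cast; nlinarith [Nat.cast_nonneg (α := ℝ) m]) two_ne_zero)
  have hr0 : 0 ≤ t / 3 := by linarith
  have hr1 : t / 3 < 1 := by linarith
  have g : HasSum (fun k : ℕ => (t / 3) ^ (k + 1)) ((t / 3) / (1 - t / 3)) := by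
    have := (hasSum_geometric_of_lt_one hr0 hr1).mul_left (t / 3)
    simp_rw [← _root_.pow_succ'] at this
    exact this
  refine hasSum_le (fun k => ?_) g (log_stirlingSeq_diff_hasSum m)
  have h3 : (2 * (k : ℝ) + 3) ≤ 3 ^ (k + 1) := by exact_mod_cast pow_three_ge k
  have key : ((1 : ℝ) / 3) ^ (k + 1) ≤ 1 / (2 * ↑(k + 1) + 1) := by
    rw [one_div, inv_pow, one_div]
    apply inv_anti₀ (by positivity)
    push_cast
    linarith
  calc (t / 3) ^ (k + 1) = (1 / 3 : ℝ) ^ (k + 1) * t ^ (k + 1) := by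
        rw [← mul_pow]; ring_nf
    _ ≤ 1 / (2 * ↑(k + 1) + 1) * t ^ (k + 1) :=
        mul_le_mul_of_nonneg_right key (pow_nonneg ht0 _)

/-- upper geometric bound on the log-difference -/
lemma diff_le (m : ℕ) :
    Real.log (stirlingSeq (m + 1)) - Real.log (stirlingSeq (m + 2)) ≤
      (1 / 3 : ℝ) * (((1 : ℝ) / (2 * ↑(m + 1) + 1)) ^ 2 /
        (1 - ((1 : ℝ) / (2 * ↑(m + 1) + 1)) ^ 2)) := by
  set t : ℝ := ((1 : ℝ) / (2 * ↑(m + 1) + 1)) ^ 2 with ht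
  have ht0 : 0 ≤ t := sq_nonneg _
  have ht1 : t < 1 := by
    rw [ht, one_div, inv_pow]
    exact inv_lt_one_of_one_lt₀
      (one_lt_pow₀ (by push_cast; nlinarith [Nat.cast_nonneg (α := ℝ) m]) two_ne_zero)
  have g : HasSum (fun k : ℕ => (1 / 3 : ℝ) * t ^ (k + 1)) ((1 / 3 : ℝ) * (t / (1 - t))) := by
    have := ((hasSum_geometric_of_lt_one ht0 ht1).mul_left t).mul_left (1 / 3 : ℝ)
    simp_rw [← _root_.pow_succ'] at this
    exact this
  refine hasSum_le (fun k => ?_) (log_stirlingSeq_diff_hasSum m) g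
  have key : (1 : ℝ) / (2 * ↑(k + 1) + 1) ≤ 1 / 3 := by
    apply div_le_div_of_nonneg_left one_pos.le (by norm_num)
    push_cast; linarith [Nat.cast_nonneg (α := ℝ) k]
  exact mul_le_mul_of_nonneg_right key (pow_nonneg ht0 _)

/-- The sequence `log (stirlingSeq (m+1)) - 1/(12(m+1))` is monotone. -/
lemma F_mono : Monotone (fun m : ℕ =>
    Real.log (stirlingSeq (m + 1)) - 1 / (12 * (↑m + 1 : ℝ))) := by
  apply monotone_nat_of_le_succ
  intro m
  have h := diff_le m
  have hM1 : 1 ≤ ((m : ℝ) + 1) := by nlinarith [Nat.cast_nonneg (α := ℝ) m]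
  have hc : ((↑(m + 1) : ℝ)) = (m : ℝ) + 1 := by push_cast; ring
  rw [hc, alg2 _ hM1] at h
  have hcast : ((↑(m + 1) : ℝ) + 1) = ((m : ℝ) + 1) + 1 := by push_cast; ring
  simp only [hcast, hc]
  linarith

/-- The sequence `log (stirlingSeq (m+1)) - 1/(12(m+1)+1)` is antitone. -/
lemma G_anti : Antitone (fun m : ℕ =>
    Real.log (stirlingSeq (m + 1)) - 1 / (12 * (↑m + 1 : ℝ) + 1)) := by
  apply antitone_nat_of_succ_le
  intro m
  have h := diff_ge m
  have hM1 : 1 ≤ ((m : ℝ) + 1) := by nlinarith [Nat.cast_nonneg (α := ℝ) m]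
  have hc : ((↑(m + 1) : ℝ)) = (m : ℝ) + 1 := by push_cast; ring
  rw [hc, alg1 _ hM1] at h
  set M : ℝ := (m : ℝ) + 1
  have hnum : 1 / (12 * M + 1) - 1 / (12 * (M + 1) + 1) ≤ 1 / (12 * M ^ 2 + 12 * M + 2) := by
    have p1 : (0 : ℝ) < 12 * M + 1 := by nlinarith
    have p2 : (0 : ℝ) < 12 * (M + 1) + 1 := by nlinarith
    have p3 : (0 : ℝ) < 12 * M ^ 2 + 12 * M + 2 := by nlinarith
    rw [div_sub_div _ _ (ne_of_gt p1) (ne_of_gt p2), div_le_div_iff₀ (by positivity) p3]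
    nlinarith
  have hcast : ((↑(m + 1) : ℝ) + 1) = M + 1 := by push_cast; ring
  simp only [hcast, hc]
  linarith

lemma tendsto_log_stirling :
    Filter.Tendsto (fun m : ℕ => Real.log (stirlingSeq (m + 1))) atTop (𝓝 (Real.log (√π))) := by
  have h' : Filter.Tendsto (fun m : ℕ => stirlingSeq (m + 1)) atTop (𝓝 (√π)) :=
    Stirling.tendsto_stirlingSeq_sqrt_pi.comp (tendsto_add_atTop_nat 1)
  exact h'.log (ne_of_gt (Real.sqrt_pos.mpr Real.pi_pos))

lemma tendsto_aux (c : ℝ) :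
    Filter.Tendsto (fun m : ℕ => 1 / (12 * ((m : ℝ) + 1) + c)) atTop (𝓝 0) := by
  have h1 : Filter.Tendsto (fun m : ℕ => 12 * ((m : ℝ) + 1) + c) atTop atTop := by
    apply Filter.tendsto_atTop_add_const_right
    apply Filter.Tendsto.const_mul_atTop (by norm_num : (0 : ℝ) < 12)
    exact Filter.tendsto_atTop_add_const_right _ 1 tendsto_natCast_atTop_atTop
  simpa [one_div, Function.comp_def] using tendsto_inv_atTop_zero.comp h1

lemma log_bounds (x : ℕ) (hx : 0 < x) :
    Real.log (√π) + 1 / (12 * (x : ℝ) + 1) ≤ Real.log (stirlingSeq x) ∧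
      Real.log (stirlingSeq x) ≤ Real.log (√π) + 1 / (12 * (x : ℝ)) := by
  obtain ⟨m, rfl⟩ := Nat.exists_eq_add_of_lt hx
  rw [zero_add]
  have hcast : ((m + 1 : ℕ) : ℝ) = (m : ℝ) + 1 := by push_cast; ring
  constructor
  · have hG : Filter.Tendsto (fun m : ℕ =>
        Real.log (stirlingSeq (m + 1)) - 1 / (12 * (↑m + 1 : ℝ) + 1)) atTop
        (𝓝 (Real.log (√π))) := by
      simpa using tendsto_log_stirling.sub (tendsto_aux 1)
    have := G_anti.le_of_tendsto hG m
    rw [hcast]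
    linarith
  · have hF : Filter.Tendsto (fun m : ℕ =>
        Real.log (stirlingSeq (m + 1)) - 1 / (12 * (↑m + 1 : ℝ))) atTop
        (𝓝 (Real.log (√π))) := by
      have h0 : Filter.Tendsto (fun m : ℕ => 1 / (12 * ((m : ℝ) + 1))) atTop (𝓝 0) := by
        simpa using tendsto_aux 0
      simpa using tendsto_log_stirling.sub h0
    have := F_mono.ge_of_tendsto hF m
    rw [hcast]
    linarith

end RobbinsAux

/-- Robbins: the Stirling error term
`r(x) = x!/(√(2πx)·(x/e)^x)` satisfies
`exp(1/(12x+1)) ≤ r(x) ≤ exp(1/(12x))` for every positive integer `x`. -/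
theorem robbins_bounds (x : ℕ) (hx : 0 < x) :
    Real.exp (1 / (12 * x + 1)) ≤
        (x.factorial : ℝ) / (Real.sqrt (2 * π * x) * ((x : ℝ) / Real.exp 1) ^ x) ∧
      (x.factorial : ℝ) / (Real.sqrt (2 * π * x) * ((x : ℝ) / Real.exp 1) ^ x)
        ≤ Real.exp (1 / (12 * x)) := by
  obtain ⟨h1, h2⟩ := RobbinsAux.log_bounds x hx
  have hs : 0 < Stirling.stirlingSeq x := by
    obtain ⟨m, rfl⟩ := Nat.exists_eq_add_of_lt hx
    rw [zero_add]
    exact Stirling.stirlingSeq'_pos m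
  have hsqrtpi : (0 : ℝ) < √π := Real.sqrt_pos.mpr Real.pi_pos
  have hrw : (x.factorial : ℝ) / (Real.sqrt (2 * π * x) * ((x : ℝ) / Real.exp 1) ^ x)
      = Stirling.stirlingSeq x / √π := by
    rw [Stirling.stirlingSeq]
    have hsq : Real.sqrt (2 * π * (x : ℝ)) = √π * Real.sqrt (2 * x) := by
      rw [← Real.sqrt_mul Real.pi_pos.le]
      ring_nf
    rw [hsq]
    have hxpos : (0 : ℝ) < (x : ℝ) := by exact_mod_cast hx
    have hd : (0 : ℝ) < Real.sqrt (2 * x) * ((x : ℝ) / Real.exp 1) ^ x := by positivity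
    field_simp
  rw [hrw]
  have hlo := Real.exp_le_exp.mpr h1
  have hhi := Real.exp_le_exp.mpr h2
  rw [Real.exp_add, Real.exp_log hsqrtpi, Real.exp_log hs] at hlo
  rw [Real.exp_add, Real.exp_log hsqrtpi, Real.exp_log hs] at hhi
  constructor
  · rw [le_div_iff₀ hsqrtpi, mul_comm]
    exact hlo
  · rw [div_le_iff₀ hsqrtpi, mul_comm]
    exact hhi
end
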